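/- arXiv:2410.17254 — 3 statements merged into one kernel-verified Lean document; each statement's English description precedes it below -/
import Mathlib

section
/- Let d ≥ 1. If Θ ⊆ ℝ^d is a Borel set with ℋ^{d−1}(Θ) < ∞, where ℋ^{d−1} denotes the (d−1)-dimensional Hausdorff measure, then Θ is permeable. -/
open Set MeasureTheory
open scoped ENNReal

/-- The length (total variation w.r.t. the Euclidean norm) of a path `γ` over `[a,b]`,
as the supremum over partitions `a = t₀ ≤ t₁ ≤ … ≤ tₙ = b` of the sums of norms of
increments. -/
noncomputable def pathLen {d : ℕ} (γ : ℝ → EuclideanSpace ℝ (Fin d)) (a b : ℝ) : ℝ≥0∞ :=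
  ⨆ n : ℕ, ⨆ t : {t : ℕ → ℝ // Monotone t ∧ t 0 = a ∧ t n = b},
    ∑ i ∈ Finset.range n, ENNReal.ofReal ‖γ (t.1 (i + 1)) - γ (t.1 i)‖

/-- `Θ ⊆ ℝ^d` is null permeable: for all `x, y` and `δ > 0` there is a path from `x` to `y`
of length at most `‖y - x‖ + δ` meeting `Θ` at most in `{x, y}`. -/
def NullPermeable {d : ℕ} (Θ : Set (EuclideanSpace ℝ (Fin d))) : Prop :=
  ∀ x y : EuclideanSpace ℝ (Fin d), ∀ δ : ℝ, 0 < δ →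
    ∃ (a b : ℝ) (γ : ℝ → EuclideanSpace ℝ (Fin d)),
      a < b ∧ ContinuousOn γ (Set.Icc a b) ∧ γ a = x ∧ γ b = y ∧
      pathLen γ a b ≤ ENNReal.ofReal (‖y - x‖ + δ) ∧
      γ '' Set.Icc a b ∩ Θ ⊆ {x, y}

/-- `Θ ⊆ ℝ^d` is permeable: for all `x, y` and `δ > 0` there is a path from `x` to `y`
of length at most `‖y - x‖ + δ` such that the closure of its intersection with `Θ`
is countable. -/
def Permeable {d : ℕ} (Θ : Set (EuclideanSpace ℝ (Fin d))) : Prop :=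
  ∀ x y : EuclideanSpace ℝ (Fin d), ∀ δ : ℝ, 0 < δ →
    ∃ (a b : ℝ) (γ : ℝ → EuclideanSpace ℝ (Fin d)),
      a < b ∧ ContinuousOn γ (Set.Icc a b) ∧ γ a = x ∧ γ b = y ∧
      pathLen γ a b ≤ ENNReal.ofReal (‖y - x‖ + δ) ∧
      (closure (γ '' Set.Icc a b ∩ Θ)).Countable

section Aux

open Metric
open scoped NNReal RealInnerProductSpace

private lemma pathLen_le_of_lip {d : ℕ} {γ : ℝ → EuclideanSpace ℝ (Fin d)} {a b K : ℝ}
    (hK : 0 ≤ K) (h : ∀ s t, a ≤ s → s ≤ t → t ≤ b → ‖γ t - γ s‖ ≤ K * (t - s)) :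
    pathLen γ a b ≤ ENNReal.ofReal (K * (b - a)) := by
  refine iSup_le fun n => iSup_le fun t => ?_
  obtain ⟨t, htm, ht0, htn⟩ := t
  calc ∑ i ∈ Finset.range n, ENNReal.ofReal ‖γ (t (i + 1)) - γ (t i)‖
      ≤ ∑ i ∈ Finset.range n, ENNReal.ofReal (K * (t (i + 1) - t i)) := by
        refine Finset.sum_le_sum fun i hi => ENNReal.ofReal_le_ofReal ?_
        have hi' : i + 1 ≤ n := Finset.mem_range.mp hi
        exact h _ _ (ht0 ▸ htm (Nat.zero_le i)) (htm (Nat.le_succ i)) (htn ▸ htm hi')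
    _ = ENNReal.ofReal (∑ i ∈ Finset.range n, K * (t (i + 1) - t i)) := by
        rw [ENNReal.ofReal_sum_of_nonneg]
        intro i _
        exact mul_nonneg hK (sub_nonneg.mpr (htm (Nat.le_succ i)))
    _ = ENNReal.ofReal (K * (b - a)) := by
        rw [← Finset.mul_sum, Finset.sum_range_sub, ht0, htn]

/-- Topological lemma: if a set meets every "slab" in a finite set, its closure adds
at most the point `q`. -/
private lemma closure_subset_of_slabs {X : Type*} [MetricSpace X] {F C : Set X} {q : X}
    {S : ℕ → Set X} (hC : IsClosed C) (hFC : F ⊆ C)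
    (hfin : ∀ k, (F ∩ S k).Finite)
    (hnb : ∀ z ∈ C, z ≠ q → ∃ k, S k ∈ nhds z) :
    closure F ⊆ F ∪ {q} := by
  intro z hz
  have hzC : z ∈ C := hC.closure_subset (closure_mono hFC hz)
  by_cases hzq : z = q
  · exact Or.inr hzq
  obtain ⟨k, hk⟩ := hnb z hzC hzq
  have hdecomp : F ⊆ (F ∩ S k) ∪ (F \ S k) := fun w hw => by
    by_cases hwS : w ∈ S k
    · exact Or.inl ⟨hw, hwS⟩
    · exact Or.inr ⟨hw, hwS⟩
  have hz2 : z ∈ closure (F ∩ S k) ∪ closure (F \ S k) := by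
    rw [← closure_union]
    exact closure_mono hdecomp hz
  rcases hz2 with hz2 | hz2
  · exact Or.inl ((hfin k).isClosed.closure_subset hz2).1
  · exfalso
    obtain ⟨O, hOS, hOopen, hzO⟩ := _root_.mem_nhds_iff.mp hk
    obtain ⟨w, hwO, hwF⟩ := mem_closure_iff.mp hz2 O hOopen hzO
    exact hwF.2 (hOS hwO)

example : True := trivial

private lemma exists_sep {X : Type*} [MetricSpace X] {T : Set X} (hT : T.Finite) :
    ∃ j : ℕ, T.Pairwise fun a b => 1 / (j + 1 : ℝ) ≤ dist a b := by
  classical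
  set D : Set ℝ := (fun p : X × X => dist p.1 p.2) '' {p ∈ T ×ˢ T | p.1 ≠ p.2} with hD
  have hDfin : D.Finite := ((hT.prod hT).subset (sep_subset _ _)).image _
  rcases D.eq_empty_or_nonempty with hDe | hDne
  · refine ⟨0, fun a ha b hb hab => ?_⟩
    exfalso
    have : dist a b ∈ D := ⟨(a, b), ⟨⟨ha, hb⟩, hab⟩, rfl⟩
    simp [hDe] at this
  · obtain ⟨r, hrD, hrmin⟩ := hDfin.exists_minimalFor id D hDne
    have hrpos : 0 < r := by
      obtain ⟨⟨a, b⟩, ⟨_, hab⟩, rfl⟩ := hrD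
      exact dist_pos.mpr hab
    obtain ⟨j, hj⟩ := exists_nat_gt (1 / r)
    refine ⟨j, fun a ha b hb hab => ?_⟩
    have hab' : dist a b ∈ D := ⟨(a, b), ⟨⟨ha, hb⟩, hab⟩, rfl⟩
    have h1 : r ≤ dist a b := by
      by_contra hlt
      push_neg at hlt
      have := hrmin hab' hlt.le
      simp only [id] at this
      linarith
    have : 1 / (j + 1 : ℝ) < r := by
      rw [div_lt_iff₀ (by positivity)]
      rw [div_lt_iff₀ hrpos] at hj
      nlinarith
    show 1 / (j + 1 : ℝ) ≤ dist a b
    linarith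

private lemma vol_le_of_diam {n : ℕ} {T : Set (EuclideanSpace ℝ (Fin n))} {D : ℝ≥0∞}
    (hD : D ≠ ⊤) (h : EMetric.diam T ≤ D) :
    volume T ≤ D ^ n * volume (ball (0 : EuclideanSpace ℝ (Fin n)) 1) := by
  rcases T.eq_empty_or_nonempty with rfl | ⟨x₀, hx₀⟩
  · simp
  · have hsub : T ⊆ closedBall x₀ D.toReal := by
      intro z hz
      have h1 : edist z x₀ ≤ D := le_trans (EMetric.edist_le_diam_of_mem hz hx₀) h
      rw [mem_closedBall, dist_edist]
      exact ENNReal.toReal_mono hD h1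
    calc volume T ≤ volume (closedBall x₀ D.toReal) := measure_mono hsub
      _ = ENNReal.ofReal (D.toReal ^ Module.finrank ℝ (EuclideanSpace ℝ (Fin n))) *
            volume (ball (0 : EuclideanSpace ℝ (Fin n)) 1) :=
          Measure.addHaar_closedBall _ _ ENNReal.toReal_nonneg
      _ = D ^ n * volume (ball (0 : EuclideanSpace ℝ (Fin n)) 1) := by
          rw [finrank_euclideanSpace_fin, ENNReal.ofReal_pow ENNReal.toReal_nonneg,
            ENNReal.ofReal_toReal hD]

private lemma lipOn_ediam_image {X Y : Type*} [EMetricSpace X] [EMetricSpace Y]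
    {f : X → Y} {K : ℝ≥0} {s : Set X} (hf : LipschitzOnWith K f s) :
    EMetric.diam (f '' s) ≤ (K : ℝ≥0∞) * EMetric.diam s := by
  refine EMetric.diam_le fun p hp q hq => ?_
  obtain ⟨a, ha, rfl⟩ := hp
  obtain ⟨b, hb, rfl⟩ := hq
  exact le_trans (hf ha hb) (mul_le_mul_right (EMetric.edist_le_diam_of_mem ha hb) _)

private lemma finite_fibers {d d' : ℕ} (f : EuclideanSpace ℝ (Fin d) → EuclideanSpace ℝ (Fin d'))
    (S : Set (EuclideanSpace ℝ (Fin d))) (K : ℝ≥0) (hf : LipschitzOnWith K f S)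
    (hS : μH[(d' : ℝ)] S ≠ ⊤) :
    volume {p : EuclideanSpace ℝ (Fin d') | (S ∩ f ⁻¹' {p}).Infinite} = 0 := by
  classical
  set μ := (volume : Measure (EuclideanSpace ℝ (Fin d')))
  set vb : ℝ≥0∞ := volume (ball (0 : EuclideanSpace ℝ (Fin d')) 1) with hvb
  set c : ℝ≥0∞ := (K : ℝ≥0∞) ^ d' * vb * (μH[(d' : ℝ)] S + 1) with hc
  have hctop : c ≠ ⊤ := by
    refine ENNReal.mul_ne_top (ENNReal.mul_ne_top ?_ ?_) ?_
    · exact ENNReal.pow_ne_top ENNReal.coe_ne_top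
    · exact measure_ball_lt_top.ne
    · exact ENNReal.add_ne_top.mpr ⟨hS, ENNReal.one_ne_top⟩
  set Bad := {p : EuclideanSpace ℝ (Fin d') | (S ∩ f ⁻¹' {p}).Infinite} with hBad
  have key : ∀ m : ℕ, μ Bad ≤ c / (m + 1 : ℕ) := by
    intro m
    set E : ℕ → Set (EuclideanSpace ℝ (Fin d')) := fun j =>
      {p | ∃ T : Set (EuclideanSpace ℝ (Fin d)), T ⊆ S ∩ f ⁻¹' {p} ∧ T.Finite ∧
        T.ncard = m + 1 ∧ T.Pairwise fun a b => 1 / (j + 1 : ℝ) ≤ dist a b} with hE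
    have hBadE : Bad ⊆ ⋃ j, E j := by
      intro p hp
      obtain ⟨T, hTs, hTfin, hTcard⟩ := Set.Infinite.exists_subset_ncard_eq hp (m + 1)
      obtain ⟨j, hj⟩ := exists_sep hTfin
      exact mem_iUnion.mpr ⟨j, T, hTs, hTfin, hTcard, hj⟩
    have hmono : Monotone E := by
      intro j j' hjj' p hp
      obtain ⟨T, h1, h2, h3, h4⟩ := hp
      refine ⟨T, h1, h2, h3, h4.mono' fun a b hab => le_trans ?_ hab⟩
      have : (j : ℝ) + 1 ≤ (j' : ℝ) + 1 := by
        have := (Nat.cast_le (α := ℝ)).mpr hjj'; linarith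
      exact one_div_le_one_div_of_le (by positivity) this
    have hj : ∀ j, μ (E j) ≤ c / (m + 1 : ℕ) := by
      intro j
      -- extract a cover at scale r₀
      set r₀ : ℝ≥0∞ := ENNReal.ofReal (1 / (2 * (j + 1))) with hr₀
      have hr₀pos : 0 < r₀ := by
        rw [hr₀]; exact ENNReal.ofReal_pos.mpr (by positivity)
      have hinf : (⨅ (t : ℕ → Set (EuclideanSpace ℝ (Fin d))) (_ : S ⊆ ⋃ n, t n)
          (_ : ∀ n, EMetric.diam (t n) ≤ r₀),
          ∑' n, ⨆ _ : (t n).Nonempty, EMetric.diam (t n) ^ (d' : ℝ)) ≤ μH[(d' : ℝ)] S := by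
        rw [MeasureTheory.Measure.hausdorffMeasure_apply]
        exact le_iSup_of_le r₀ (le_iSup_of_le hr₀pos le_rfl)
      have hlt : (⨅ (t : ℕ → Set (EuclideanSpace ℝ (Fin d))) (_ : S ⊆ ⋃ n, t n)
          (_ : ∀ n, EMetric.diam (t n) ≤ r₀),
          ∑' n, ⨆ _ : (t n).Nonempty, EMetric.diam (t n) ^ (d' : ℝ)) < μH[(d' : ℝ)] S + 1 :=
        lt_of_le_of_lt hinf (ENNReal.lt_add_right hS one_ne_zero)
      rw [iInf_lt_iff] at hlt
      obtain ⟨t, hlt⟩ := hlt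
      rw [iInf_lt_iff] at hlt
      obtain ⟨hcov, hlt⟩ := hlt
      rw [iInf_lt_iff] at hlt
      obtain ⟨hdiam, hlt⟩ := hlt
      -- measurable hulls of images
      set B : ℕ → Set (EuclideanSpace ℝ (Fin d')) := fun n => toMeasurable μ (f '' (t n ∩ S))
        with hB
      have hBmeas : ∀ n, MeasurableSet (B n) := fun n => measurableSet_toMeasurable _ _
      set F : EuclideanSpace ℝ (Fin d') → ℝ≥0∞ := fun p => ∑' n, (B n).indicator 1 p with hF
      have hFmeas : Measurable F :=
        Measurable.ennreal_tsum fun n => measurable_one.indicator (hBmeas n)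
      -- E j ⊆ superlevel set
      have hsub : E j ⊆ {p | ((m : ℝ≥0∞) + 1) ≤ F p} := by
        intro p hp
        obtain ⟨T, hTs, hTfin, hTcard, hTsep⟩ := hp
        set ι : EuclideanSpace ℝ (Fin d) → ℕ := fun a =>
          if h : ∃ n, a ∈ t n then h.choose else 0 with hι
        have hιmem : ∀ a ∈ T, a ∈ t (ι a) := by
          intro a ha
          have : ∃ n, a ∈ t n := mem_iUnion.mp (hcov (hTs ha).1)
          simp only [hι, dif_pos this]
          exact this.choose_spec
        have hinj : T.InjOn ι := by
          intro a ha b hb hab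
          by_contra hne
          have h1 : edist a b ≤ r₀ := by
            calc edist a b ≤ EMetric.diam (t (ι a)) :=
              EMetric.edist_le_diam_of_mem (hιmem a ha) (hab ▸ hιmem b hb)
            _ ≤ r₀ := hdiam _
          have h2 : (1 : ℝ) / (j + 1) ≤ dist a b := hTsep ha hb hne
          rw [edist_dist, hr₀] at h1
          have h3 : dist a b ≤ 1 / (2 * (j + 1)) :=
            (ENNReal.ofReal_le_ofReal_iff (by positivity)).mp h1
          have : (0:ℝ) < 1 / (j+1) := by positivity
          have h4 : (1:ℝ) / (2 * (j + 1)) < 1 / (j + 1) := by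
            rw [div_lt_div_iff₀ (by positivity) (by positivity)]; nlinarith
          linarith
        set Tf := hTfin.toFinset with hTf
        have hTfcoe : (Tf : Set _) = T := hTfin.coe_toFinset
        set I : Finset ℕ := Tf.image ι with hI
        have hIcard : I.card = m + 1 := by
          rw [hI, Finset.card_image_of_injOn (by rw [hTfcoe]; exact hinj)]
          rw [← Set.ncard_coe_finset, hTfcoe, hTcard]
        have hmemB : ∀ n ∈ I, p ∈ B n := by
          intro n hn
          rw [hI, Finset.mem_image] at hn
          obtain ⟨a, haTf, rfl⟩ := hn
          have haT : a ∈ T := by rw [← hTfcoe]; exact_mod_cast haTf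
          refine subset_toMeasurable μ _ ⟨a, ⟨hιmem a haT, (hTs haT).1⟩, ?_⟩
          have := (hTs haT).2
          simpa using this
        calc ((m : ℝ≥0∞) + 1) = ∑ n ∈ I, 1 := by
              rw [Finset.sum_const, hIcard]; simp [mul_comm]
          _ ≤ ∑ n ∈ I, (B n).indicator 1 p := by
              refine Finset.sum_le_sum fun n hn => ?_
              simp [Set.indicator_of_mem (hmemB n hn)]
          _ ≤ F p := ENNReal.sum_le_tsum I
      -- integral bound
      have hμB : ∀ n, μ (B n) ≤ (K : ℝ≥0∞) ^ d' * vb *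
          (⨆ _ : (t n).Nonempty, EMetric.diam (t n) ^ (d' : ℝ)) := by
        intro n
        rw [hB]
        rw [measure_toMeasurable]
        rcases (t n ∩ S).eq_empty_or_nonempty with he | hne
        · simp [he]
        · have hnetn : (t n).Nonempty := hne.mono inter_subset_left |>.mono (by rfl)
          rw [iSup_pos hnetn]
          have hdiamim : EMetric.diam (f '' (t n ∩ S)) ≤ (K : ℝ≥0∞) * EMetric.diam (t n) := by
            refine le_trans (lipOn_ediam_image (hf.mono inter_subset_right)) ?_
            exact mul_le_mul_right (EMetric.diam_mono inter_subset_left) _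
          have hKd : (K : ℝ≥0∞) * EMetric.diam (t n) ≠ ⊤ := by
            refine ENNReal.mul_ne_top ENNReal.coe_ne_top ?_
            exact (lt_of_le_of_lt (hdiam n) (by rw [hr₀]; exact ENNReal.ofReal_lt_top)).ne
          calc μ (f '' (t n ∩ S)) ≤ ((K : ℝ≥0∞) * EMetric.diam (t n)) ^ d' * vb :=
                vol_le_of_diam hKd hdiamim
            _ = (K : ℝ≥0∞) ^ d' * vb * EMetric.diam (t n) ^ (d' : ℝ) := by
                rw [ENNReal.rpow_natCast, mul_pow]; ring
      have hint : ∫⁻ p, F p ∂μ ≤ c := by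
        rw [hF]
        rw [lintegral_tsum fun n => (measurable_one.indicator (hBmeas n)).aemeasurable]
        calc ∑' n, ∫⁻ p, (B n).indicator 1 p ∂μ = ∑' n, μ (B n) := by
              refine tsum_congr fun n => ?_
              rw [lintegral_indicator_one (hBmeas n)]
          _ ≤ ∑' n, (K : ℝ≥0∞) ^ d' * vb *
                (⨆ _ : (t n).Nonempty, EMetric.diam (t n) ^ (d' : ℝ)) :=
              ENNReal.tsum_le_tsum hμB
          _ = (K : ℝ≥0∞) ^ d' * vb *
                ∑' n, (⨆ _ : (t n).Nonempty, EMetric.diam (t n) ^ (d' : ℝ)) :=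
              ENNReal.tsum_mul_left
          _ ≤ c := by
              rw [hc]
              exact mul_le_mul_right hlt.le _
      have cheb := mul_meas_ge_le_lintegral₀ (μ := μ) hFmeas.aemeasurable ((m : ℝ≥0∞) + 1)
      have hmE : μ (E j) ≤ μ {p | ((m : ℝ≥0∞) + 1) ≤ F p} := measure_mono hsub
      have h5 : ((m : ℝ≥0∞) + 1) * μ (E j) ≤ c := by
        calc ((m : ℝ≥0∞) + 1) * μ (E j) ≤ ((m : ℝ≥0∞) + 1) * μ {p | ((m : ℝ≥0∞) + 1) ≤ F p} :=
              mul_le_mul_right hmE _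
          _ ≤ ∫⁻ p, F p ∂μ := cheb
          _ ≤ c := hint
      rw [ENNReal.le_div_iff_mul_le (Or.inl (Nat.cast_ne_zero.mpr (Nat.succ_ne_zero m)))
        (Or.inl (by simp))]
      rw [mul_comm]
      convert h5 using 2
      push_cast
      ring
    calc μ Bad ≤ μ (⋃ j, E j) := measure_mono hBadE
      _ = ⨆ j, μ (E j) := hmono.measure_iUnion
      _ ≤ c / (m + 1 : ℕ) := iSup_le hj
  -- conclude
  by_contra h0
  have ha0 : μ Bad ≠ 0 := h0
  have hatop : μ Bad ≠ ⊤ := by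
    have h1 : μ Bad ≤ c / ((0 + 1 : ℕ) : ℝ≥0∞) := key 0
    have h2 : c / ((0 + 1 : ℕ) : ℝ≥0∞) ≠ ⊤ :=
      (ENNReal.div_lt_top hctop (by simp)).ne
    exact ne_top_of_le_ne_top h2 h1
  obtain ⟨n, hn⟩ := ENNReal.exists_nat_gt (ENNReal.div_lt_top hctop ha0).ne
  have h6 : μ Bad * (n + 1 : ℕ) ≤ c := by
    have := key n
    rwa [ENNReal.le_div_iff_mul_le (Or.inl (Nat.cast_ne_zero.mpr (Nat.succ_ne_zero n)))
      (Or.inl (by simp))] at this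
  have h7 : ((n + 1 : ℕ) : ℝ≥0∞) ≤ c / μ Bad := by
    rw [ENNReal.le_div_iff_mul_le (Or.inl ha0) (Or.inl hatop), mul_comm]
    exact h6
  have : ((n : ℝ≥0∞)) < ((n + 1 : ℕ) : ℝ≥0∞) := by
    push_cast
    exact ENNReal.lt_add_right (by simp) one_ne_zero
  exact absurd (lt_of_lt_of_le (lt_trans hn this) h7) (lt_irrefl _)

private noncomputable def seg {d : ℕ} (q mm : EuclideanSpace ℝ (Fin d)) :
    Set (EuclideanSpace ℝ (Fin d)) :=
  (fun θ : ℝ => q + θ • (mm - q)) '' Icc 0 1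

private lemma side_closure {d : ℕ} (Θ : Set (EuclideanSpace ℝ (Fin d)))
    (q mm u : EuclideanSpace ℝ (Fin d)) {cc : ℝ} (hcc : 0 < cc)
    (hinner : ⟪mm - q, u⟫ = cc)
    (hfin : ∀ k : ℕ, (Θ ∩ seg q mm ∩ {z | cc / (k + 1) ≤ ⟪z - q, u⟫}).Finite) :
    (Θ ∩ seg q mm).Countable ∧ closure (Θ ∩ seg q mm) ⊆ (Θ ∩ seg q mm) ∪ {q} := by
  have hcont : Continuous fun θ : ℝ => q + θ • (mm - q) := by continuity
  have hCc : IsCompact (seg q mm) := (isCompact_Icc).image hcont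
  have hC : IsClosed (seg q mm) := hCc.isClosed
  -- inner product along the segment
  have hinnseg : ∀ θ : ℝ, ⟪(q + θ • (mm - q)) - q, u⟫ = θ * cc := by
    intro θ
    rw [add_sub_cancel_left, real_inner_smul_left, hinner]
  have hmmq : mm ≠ q := by
    intro h
    rw [h] at hinner
    simp at hinner
    exact hcc.ne' (hinner ▸ rfl)
  -- every non-q point of the segment has positive inner product
  have hpos : ∀ z ∈ seg q mm, z ≠ q → 0 < ⟪z - q, u⟫ := by
    rintro z ⟨θ, hθ, rfl⟩ hzq
    rw [hinnseg]
    have hθ0 : θ ≠ 0 := by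
      intro h
      rw [h] at hzq
      simp at hzq
    have : 0 < θ := lt_of_le_of_ne hθ.1 (Ne.symm hθ0)
    positivity
  have hnb : ∀ z ∈ seg q mm, z ≠ q →
      ∃ k : ℕ, {w | cc / (k + 1) ≤ ⟪w - q, u⟫} ∈ nhds z := by
    intro z hz hzq
    set τ := ⟪z - q, u⟫ with hτ
    have hτpos : 0 < τ := hpos z hz hzq
    obtain ⟨k, hk⟩ := exists_nat_gt (cc / τ)
    refine ⟨k, ?_⟩
    have hlt : cc / (k + 1) < τ := by
      rw [div_lt_iff₀ (by positivity)]
      rw [div_lt_iff₀ hτpos] at hk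
      nlinarith
    have hopen : IsOpen {w : EuclideanSpace ℝ (Fin d) | cc / (k + 1) < ⟪w - q, u⟫} := by
      have : Continuous fun w : EuclideanSpace ℝ (Fin d) => ⟪w - q, u⟫ :=
        (continuous_id.sub continuous_const).inner continuous_const
      exact isOpen_lt continuous_const this
    refine Filter.mem_of_superset (hopen.mem_nhds (by exact hlt)) ?_
    intro w hw
    simp only [Set.mem_setOf_eq] at hw ⊢
    exact hw.le
  constructor
  · have hsub : Θ ∩ seg q mm ⊆ {q} ∪ ⋃ k : ℕ, (Θ ∩ seg q mm ∩ {z | cc / (k + 1) ≤ ⟪z - q, u⟫}) := by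
      intro z hz
      by_cases hzq : z = q
      · exact Or.inl hzq
      · have hτpos := hpos z hz.2 hzq
        obtain ⟨k, hk⟩ := hnb z hz.2 hzq
        right
        obtain ⟨k', hk'⟩ := exists_nat_gt (cc / ⟪z - q, u⟫)
        refine mem_iUnion.mpr ⟨k', hz, ?_⟩
        show cc / (k' + 1) ≤ ⟪z - q, u⟫
        rw [div_le_iff₀ (by positivity)]
        rw [div_lt_iff₀ hτpos] at hk'
        nlinarith
    exact Countable.mono hsub ((countable_singleton q).union
      (countable_iUnion fun k => (hfin k).countable))
  · exact closure_subset_of_slabs hC inter_subset_right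
      (fun k => hfin k) hnb

private lemma lip_g_aux {F : Type*} [NormedAddCommGroup F] [InnerProductSpace ℝ F]
    {u : F} (hu : ‖u‖ = 1) {cc β R : ℝ} (hcc : 0 < cc) (hβ : 0 < β) (hR : 0 ≤ R)
    (a b : F) (hbR : ‖b‖ ≤ R) (hσβ : β ≤ ⟪a, u⟫) (hτβ : β ≤ ⟪b, u⟫) :
    ‖(cc / ⟪a, u⟫) • a - (cc / ⟪b, u⟫) • b‖ ≤ cc * (1 / β + R / β ^ 2) * ‖a - b‖ := by
  obtain ⟨σ, hσeq⟩ : ∃ σ, ⟪a, u⟫ = σ := ⟨_, rfl⟩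
  obtain ⟨τ, hτeq⟩ : ∃ τ, ⟪b, u⟫ = τ := ⟨_, rfl⟩
  rw [hσeq] at hσβ
  rw [hτeq] at hτβ
  have hσ0 : 0 < σ := lt_of_lt_of_le hβ hσβ
  have hτ0 : 0 < τ := lt_of_lt_of_le hβ hτβ
  have hστ : |τ - σ| ≤ ‖a - b‖ := by
    have h : τ - σ = ⟪b - a, u⟫ := by rw [inner_sub_left, hσeq, hτeq]
    rw [h]
    calc |⟪b - a, u⟫| ≤ ‖b - a‖ * ‖u‖ := abs_real_inner_le_norm _ _
      _ = ‖a - b‖ := by rw [hu, mul_one, norm_sub_rev]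
  have hdiff : (cc / σ) • a - (cc / τ) • b = (cc / σ) • (a - b) + ((cc / σ) - (cc / τ)) • b := by
    rw [sub_smul, smul_sub]
    abel
  rw [hσeq, hτeq, hdiff]
  have h1 : ‖(cc / σ) • (a - b)‖ ≤ (cc / β) * ‖a - b‖ := by
    rw [norm_smul, Real.norm_eq_abs, abs_of_pos (by positivity : (0:ℝ) < cc / σ)]
    have h11 : cc / σ ≤ cc / β := div_le_div_of_nonneg_left hcc.le hβ hσβ
    exact mul_le_mul_of_nonneg_right h11 (norm_nonneg _)
  have h2 : ‖((cc / σ) - (cc / τ)) • b‖ ≤ (cc * R / β ^ 2) * ‖a - b‖ := by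
    rw [norm_smul, Real.norm_eq_abs]
    have hdq : cc / σ - cc / τ = cc * (τ - σ) / (σ * τ) := by
      field_simp
    have habs : |cc / σ - cc / τ| ≤ cc * ‖a - b‖ / β ^ 2 := by
      rw [hdq, abs_div, abs_mul, abs_of_pos hcc, abs_of_pos (by positivity : (0:ℝ) < σ * τ)]
      have h3 : β ^ 2 ≤ σ * τ := by nlinarith
      gcongr
    calc |cc / σ - cc / τ| * ‖b‖ ≤ (cc * ‖a - b‖ / β ^ 2) * R :=
          mul_le_mul habs hbR (norm_nonneg b) (by positivity)
      _ = (cc * R / β ^ 2) * ‖a - b‖ := by ring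
  calc ‖(cc / σ) • (a - b) + ((cc / σ) - (cc / τ)) • b‖
      ≤ ‖(cc / σ) • (a - b)‖ + ‖((cc / σ) - (cc / τ)) • b‖ := norm_add_le _ _
    _ ≤ (cc / β) * ‖a - b‖ + (cc * R / β ^ 2) * ‖a - b‖ := add_le_add h1 h2
    _ = cc * (1 / β + R / β ^ 2) * ‖a - b‖ := by ring

private lemma lip_g {d : ℕ} (q u : EuclideanSpace ℝ (Fin d)) (hu : ‖u‖ = 1)
    {cc β R : ℝ} (hcc : 0 < cc) (hβ : 0 < β) (hR : 0 ≤ R) :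
    ∃ K : ℝ≥0, LipschitzOnWith K (fun z => q + (cc / ⟪z - q, u⟫) • (z - q))
      ({z | β ≤ ⟪z - q, u⟫} ∩ Metric.closedBall q R) := by
  refine ⟨(cc * (1 / β + R / β ^ 2)).toNNReal, LipschitzOnWith.of_dist_le_mul
    fun z hz w hw => ?_⟩
  obtain ⟨hz1, hz2⟩ := hz
  obtain ⟨hw1, hw2⟩ := hw
  simp only [Set.mem_setOf_eq] at hz1 hw1
  rw [Metric.mem_closedBall, dist_eq_norm] at hz2 hw2
  have key := lip_g_aux hu hcc hβ hR (z - q) (w - q) hw2 hz1 hw1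
  rw [dist_eq_norm, dist_eq_norm]
  have he1 : q + (cc / ⟪z - q, u⟫) • (z - q) - (q + (cc / ⟪w - q, u⟫) • (w - q))
      = (cc / ⟪z - q, u⟫) • (z - q) - (cc / ⟪w - q, u⟫) • (w - q) := by
    abel
  have he2 : (z - q) - (w - q) = z - w := by abel
  rw [he1]
  rw [he2] at key
  refine le_trans key ?_
  have h9 : cc * (1 / β + R / β ^ 2) ≤ ((cc * (1 / β + R / β ^ 2)).toNNReal : ℝ) :=
    le_of_eq (Real.coe_toNNReal _ (by positivity)).symm
  have h10 := mul_le_mul_of_nonneg_right h9 (norm_nonneg (z - w))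
  exact_mod_cast h10

end Aux

section Main
open Metric
open scoped NNReal RealInnerProductSpace

set_option maxHeartbeats 1000000 in
/-- If `Θ ⊆ ℝ^d` (`d ≥ 1`) is a Borel set of finite `(d-1)`-dimensional Hausdorff measure,
then `Θ` is permeable. -/
theorem permeable_of_hausdorffMeasure_lt_top {d : ℕ} (hd : 1 ≤ d)
    (Θ : Set (EuclideanSpace ℝ (Fin d))) (hmeas : MeasurableSet Θ)
    (hΘ : μH[((d : ℝ) - 1)] Θ < ⊤) :
    Permeable Θ := by
  classical
  intro x y δ hδ
  by_cases hxy : x = y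
  · -- constant path
    refine ⟨0, 1, fun _ => x, one_pos, continuousOn_const, rfl, by rw [← hxy], ?_, ?_⟩
    · have h := pathLen_le_of_lip (γ := fun _ : ℝ => x) (a := 0) (b := 1) (K := 0)
        le_rfl (fun s t _ _ _ => by simp)
      refine le_trans h ?_
      refine ENNReal.ofReal_le_ofReal ?_
      have := norm_nonneg (y - x)
      nlinarith
    · have hsub : (fun _ : ℝ => x) '' Icc 0 1 ∩ Θ ⊆ {x} := by
        rintro z ⟨⟨t, _, rfl⟩, _⟩; rfl
      exact (countable_singleton x).mono (closure_minimal hsub isClosed_singleton)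
  -- main case
  have hyx0 : y - x ≠ 0 := sub_ne_zero.mpr (Ne.symm hxy)
  have hnv : 0 < ‖y - x‖ := norm_pos_iff.mpr hyx0
  set nv := ‖y - x‖ with hnvdef
  set u : EuclideanSpace ℝ (Fin d) := nv⁻¹ • (y - x) with hudef
  have hu : ‖u‖ = 1 := by
    rw [hudef, norm_smul, Real.norm_eq_abs, abs_of_pos (by positivity), ← hnvdef]
    field_simp
  have hune : u ≠ 0 := by
    intro h; rw [h] at hu; simp at hu
  set z₀ : EuclideanSpace ℝ (Fin d) := x + (2⁻¹ : ℝ) • (y - x) with hz₀def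
  set cc : ℝ := nv / 2 with hccdef
  have hccpos : 0 < cc := by rw [hccdef]; positivity
  have hz₀x : z₀ - x = (2⁻¹ : ℝ) • (y - x) := by rw [hz₀def]; abel
  have hz₀y : z₀ - y = (-(2⁻¹ : ℝ)) • (y - x) := by
    rw [hz₀def]; module
  have hinner_yx : ⟪y - x, u⟫ = nv := by
    rw [hudef, real_inner_smul_right, real_inner_self_eq_norm_mul_norm, ← hnvdef]
    field_simp
  have hcx : ⟪z₀ - x, u⟫ = cc := by
    rw [hz₀x, real_inner_smul_left, hinner_yx, hccdef]
    ring
  have hcy : ⟪z₀ - y, -u⟫ = cc := by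
    rw [hz₀y, inner_neg_right, real_inner_smul_left, hinner_yx, hccdef]
    ring
  have hnu : ‖-u‖ = 1 := by rw [norm_neg]; exact hu
  -- the orthogonal complement and coordinates
  set W := (ℝ ∙ u)ᗮ with hWdef
  set d' := Module.finrank ℝ W with hd'def
  have hd' : ((d' : ℝ)) = (d : ℝ) - 1 := by
    have h1 : Module.finrank ℝ (ℝ ∙ u) = 1 := finrank_span_singleton hune
    have h2 : Module.finrank ℝ (ℝ ∙ u) + Module.finrank ℝ W = d := by
      rw [hWdef, Submodule.finrank_add_finrank_orthogonal, finrank_euclideanSpace_fin]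
    rw [h1] at h2
    have : d' = d - 1 := by omega
    rw [this]
    have hd1 : 1 ≤ d := by omega
    push_cast [Nat.cast_sub hd1]
    ring
  set B := stdOrthonormalBasis ℝ W with hBdef
  set ψ : EuclideanSpace ℝ (Fin d) → EuclideanSpace ℝ (Fin d') :=
    fun e => B.repr (Submodule.orthogonalProjectionOnto W e) with hψdef
  have hψ : LipschitzWith 1 ψ := by
    refine LipschitzWith.of_dist_le_mul fun a b => ?_
    rw [hψdef, dist_eq_norm, dist_eq_norm, NNReal.coe_one, one_mul]
    calc ‖B.repr (Submodule.orthogonalProjectionOnto W a) - B.repr (Submodule.orthogonalProjectionOnto W b)‖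
        = ‖B.repr ((Submodule.orthogonalProjectionOnto W a) - (Submodule.orthogonalProjectionOnto W b))‖ := by
          rw [map_sub]
      _ = ‖(Submodule.orthogonalProjectionOnto W a) - (Submodule.orthogonalProjectionOnto W b)‖ :=
          B.repr.norm_map _
      _ = ‖Submodule.orthogonalProjectionOnto W (a - b)‖ := by rw [map_sub]
      _ ≤ ‖a - b‖ := by
          refine le_trans ((Submodule.orthogonalProjectionOnto W).le_opNorm _) ?_
          have := Submodule.orthogonalProjectionOnto_norm_le W
          have h0 := norm_nonneg (a - b)
          nlinarith
  have horth : ∀ w : W, ⟪(w : EuclideanSpace ℝ (Fin d)), u⟫ = 0 := by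
    intro w
    have h := (Submodule.mem_orthogonal (ℝ ∙ u) (w : EuclideanSpace ℝ (Fin d))).mp w.2
    rw [real_inner_comm]
    exact h u (Submodule.mem_span_singleton_self u)
  set emb : EuclideanSpace ℝ (Fin d') → EuclideanSpace ℝ (Fin d) :=
    fun v => z₀ + ((B.repr.symm v : W) : EuclideanSpace ℝ (Fin d)) with hembdef
  have hψemb : ∀ v, ψ (emb v) = ψ z₀ + v := by
    intro v
    simp only [hembdef, hψdef]
    rw [map_add, map_add]
    congr 1
    rw [Submodule.orthogonalProjectionOnto_mem_subspace_eq_self (B.repr.symm v)]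
    exact B.repr.apply_symm_apply v
  have hembz₀ : ∀ v, ‖emb v - z₀‖ = ‖v‖ := by
    intro v
    simp only [hembdef, add_sub_cancel_left]
    rw [Submodule.norm_coe]
    exact B.repr.symm.norm_map v
  have hembinner : ∀ v (q : EuclideanSpace ℝ (Fin d)) (uu : EuclideanSpace ℝ (Fin d)),
      (⟪z₀ - q, uu⟫ = cc) → (∀ w : W, ⟪(w : EuclideanSpace ℝ (Fin d)), uu⟫ = 0) →
        ⟪emb v - q, uu⟫ = cc := by
    intro v q uu hq hw
    simp only [hembdef]
    have : z₀ + ((B.repr.symm v : W) : EuclideanSpace ℝ (Fin d)) - q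
        = (z₀ - q) + ((B.repr.symm v : W) : EuclideanSpace ℝ (Fin d)) := by abel
    rw [this, inner_add_left, hq, hw, add_zero]
  have horthneg : ∀ w : W, ⟪(w : EuclideanSpace ℝ (Fin d)), -u⟫ = 0 := by
    intro w
    rw [inner_neg_right, horth, neg_zero]
  -- choose a good parameter v
  set ρ : ℝ := min (δ / 2) (nv / 2) with hρdef
  have hρpos : 0 < ρ := by rw [hρdef]; positivity
  set R : ℝ := nv with hRdef
  set Ax : ℕ → Set (EuclideanSpace ℝ (Fin d)) := fun k =>
    {z | cc / (k + 1) ≤ ⟪z - x, u⟫} ∩ Metric.closedBall x R with hAxdef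
  set Ay : ℕ → Set (EuclideanSpace ℝ (Fin d)) := fun k =>
    {z | cc / (k + 1) ≤ ⟪z - y, -u⟫} ∩ Metric.closedBall y R with hAydef
  set fx : EuclideanSpace ℝ (Fin d) → EuclideanSpace ℝ (Fin d') :=
    fun z => ψ (x + (cc / ⟪z - x, u⟫) • (z - x)) with hfxdef
  set fy : EuclideanSpace ℝ (Fin d) → EuclideanSpace ℝ (Fin d') :=
    fun z => ψ (y + (cc / ⟪z - y, -u⟫) • (z - y)) with hfydef
  have hμΘ : ∀ S : Set (EuclideanSpace ℝ (Fin d)), S ⊆ Θ → μH[(d' : ℝ)] S ≠ ⊤ := by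
    intro S hS
    rw [hd']
    exact (lt_of_le_of_lt (measure_mono hS) hΘ).ne
  have hlipfx : ∀ k : ℕ, ∃ K : ℝ≥0, LipschitzOnWith K fx (Θ ∩ Ax k) := by
    intro k
    obtain ⟨K, hK⟩ := lip_g x u hu (β := cc / (k+1)) (R := R) hccpos
      (by positivity) hnv.le
    exact ⟨1 * K, (hψ.comp_lipschitzOnWith (hK.mono (by rw [hAxdef]; exact inter_subset_right)))⟩
  have hlipfy : ∀ k : ℕ, ∃ K : ℝ≥0, LipschitzOnWith K fy (Θ ∩ Ay k) := by
    intro k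
    obtain ⟨K, hK⟩ := lip_g y (-u) hnu (β := cc / (k+1)) (R := R) hccpos
      (by positivity) hnv.le
    exact ⟨1 * K, (hψ.comp_lipschitzOnWith (hK.mono (by rw [hAydef]; exact inter_subset_right)))⟩
  set Bad : Set (EuclideanSpace ℝ (Fin d')) := ⋃ k : ℕ,
      ({p | (Θ ∩ Ax k ∩ fx ⁻¹' {p}).Infinite} ∪ {p | (Θ ∩ Ay k ∩ fy ⁻¹' {p}).Infinite})
    with hBaddef
  have hBad0 : volume Bad = 0 := by
    rw [hBaddef]
    refine measure_iUnion_null fun k => measure_union_null ?_ ?_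
    · obtain ⟨K, hK⟩ := hlipfx k
      exact finite_fibers fx (Θ ∩ Ax k) K hK (hμΘ _ inter_subset_left)
    · obtain ⟨K, hK⟩ := hlipfy k
      exact finite_fibers fy (Θ ∩ Ay k) K hK (hμΘ _ inter_subset_left)
  have hV0 : volume ((fun v : EuclideanSpace ℝ (Fin d') => ψ z₀ + v) ⁻¹' Bad) = 0 := by
    rw [measure_preimage_add]
    exact hBad0
  obtain ⟨v, hvball, hvV⟩ : ∃ v, v ∈ Metric.ball (0 : EuclideanSpace ℝ (Fin d')) ρ ∧
      v ∉ (fun v : EuclideanSpace ℝ (Fin d') => ψ z₀ + v) ⁻¹' Bad := by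
    by_contra h
    push_neg at h
    have hsub : Metric.ball (0 : EuclideanSpace ℝ (Fin d')) ρ ⊆
        (fun v : EuclideanSpace ℝ (Fin d') => ψ z₀ + v) ⁻¹' Bad := h
    have h1 := measure_mono (μ := (volume : Measure (EuclideanSpace ℝ (Fin d')))) hsub
    rw [hV0] at h1
    exact absurd (le_antisymm h1 (by simp)) (measure_ball_pos volume 0 hρpos).ne'
  -- the good midpoint
  set m : EuclideanSpace ℝ (Fin d) := emb v with hmdef
  have hmx_inner : ⟪m - x, u⟫ = cc := hembinner v x u hcx horth
  have hmy_inner : ⟪m - y, -u⟫ = cc := hembinner v y (-u) hcy horthneg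
  have hmz₀ : ‖m - z₀‖ < ρ := by
    rw [hmdef, hembz₀ v]
    exact mem_ball_zero_iff.mp hvball
  have hz₀xnorm : ‖z₀ - x‖ = nv / 2 := by
    rw [hz₀x, norm_smul, Real.norm_eq_abs, ← hnvdef]
    rw [abs_of_pos (by norm_num : (0:ℝ) < 2⁻¹)]
    ring
  have hz₀ynorm : ‖z₀ - y‖ = nv / 2 := by
    rw [hz₀y, norm_smul, Real.norm_eq_abs, ← hnvdef, abs_neg]
    rw [abs_of_pos (by norm_num : (0:ℝ) < 2⁻¹)]
    ring
  have hmxnorm : ‖m - x‖ ≤ nv / 2 + ρ := by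
    calc ‖m - x‖ = ‖(m - z₀) + (z₀ - x)‖ := by rw [sub_add_sub_cancel]
      _ ≤ ‖m - z₀‖ + ‖z₀ - x‖ := norm_add_le _ _
      _ ≤ nv / 2 + ρ := by rw [hz₀xnorm]; linarith
  have hmynorm : ‖m - y‖ ≤ nv / 2 + ρ := by
    calc ‖m - y‖ = ‖(m - z₀) + (z₀ - y)‖ := by rw [sub_add_sub_cancel]
      _ ≤ ‖m - z₀‖ + ‖z₀ - y‖ := norm_add_le _ _
      _ ≤ nv / 2 + ρ := by rw [hz₀ynorm]; linarith
  have hρnv : ρ ≤ nv / 2 := min_le_right _ _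
  have hρδ : ρ ≤ δ / 2 := min_le_left _ _
  have hmx_ne : m ≠ x := by
    intro h
    rw [h] at hmx_inner
    simp at hmx_inner
    exact hccpos.ne' (hmx_inner ▸ rfl)
  have hmy_ne : m ≠ y := by
    intro h
    rw [h] at hmy_inner
    simp at hmy_inner
    exact hccpos.ne' (hmy_inner ▸ rfl)
  -- not bad
  have hmgood : ψ m ∉ Bad := by
    intro h
    exact hvV (by rw [Set.mem_preimage, ← hψemb v, ← hmdef]; exact h)
  have hfibx : ∀ k : ℕ, (Θ ∩ Ax k ∩ fx ⁻¹' {ψ m}).Finite := by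
    intro k
    rw [← Set.not_infinite]
    intro h
    exact hmgood (mem_iUnion.mpr ⟨k, Or.inl h⟩)
  have hfiby : ∀ k : ℕ, (Θ ∩ Ay k ∩ fy ⁻¹' {ψ m}).Finite := by
    intro k
    rw [← Set.not_infinite]
    intro h
    exact hmgood (mem_iUnion.mpr ⟨k, Or.inr h⟩)
  -- segment points lie in fibers
  have hsegsub : ∀ (q uu : EuclideanSpace ℝ (Fin d)), ⟪m - q, uu⟫ = cc → ‖m - q‖ ≤ R →
      ∀ k : ℕ, Θ ∩ seg q m ∩ {z | cc / (k + 1) ≤ ⟪z - q, uu⟫} ⊆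
        Θ ∩ ({z | cc / (k + 1) ≤ ⟪z - q, uu⟫} ∩ Metric.closedBall q R) ∩
          (fun z => ψ (q + (cc / ⟪z - q, uu⟫) • (z - q))) ⁻¹' {ψ m} := by
    rintro q uu hqinner hqnorm k z ⟨⟨hzΘ, ⟨θ, hθ, rfl⟩⟩, hzin⟩
    simp only [Set.mem_setOf_eq] at hzin
    have hinz : ⟪q + θ • (m - q) - q, uu⟫ = θ * cc := by
      rw [add_sub_cancel_left, real_inner_smul_left, hqinner]
    rw [hinz] at hzin
    have hθpos : 0 < θ := by
      rcases lt_or_eq_of_le hθ.1 with h | h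
      · exact h
      · exfalso
        rw [← h] at hzin
        simp at hzin
        have : (0:ℝ) < cc / (k + 1) := by positivity
        linarith
    refine ⟨⟨hzΘ, ⟨by rw [Set.mem_setOf_eq, hinz]; exact hzin, ?_⟩⟩, ?_⟩
    · rw [Metric.mem_closedBall, dist_eq_norm, add_sub_cancel_left, norm_smul,
        Real.norm_eq_abs, abs_of_pos hθpos]
      calc θ * ‖m - q‖ ≤ 1 * ‖m - q‖ :=
            mul_le_mul_of_nonneg_right hθ.2 (norm_nonneg _)
        _ = ‖m - q‖ := one_mul _
        _ ≤ R := hqnorm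
    · rw [Set.mem_preimage, Set.mem_singleton_iff]
      have h1 : q + θ • (m - q) - q = θ • (m - q) := add_sub_cancel_left _ _
      rw [h1, real_inner_smul_left, hqinner]
      have h2 : (cc / (θ * cc)) • (θ • (m - q)) = m - q := by
        rw [smul_smul]
        have : cc / (θ * cc) * θ = 1 := by
          field_simp
        rw [this, one_smul]
      rw [h2]
      have h3 : q + (m - q) = m := by abel
      rw [h3]
  have hRx : ‖m - x‖ ≤ R := by rw [hRdef]; linarith
  have hRy : ‖m - y‖ ≤ R := by rw [hRdef]; linarith
  have hsidex := side_closure Θ x m u hccpos hmx_inner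
    (fun k => (hfibx k).subset (hsegsub x u hmx_inner hRx k))
  have hsidey := side_closure Θ y m (-u) hccpos hmy_inner
    (fun k => (hfiby k).subset (hsegsub y (-u) hmy_inner hRy k))
  -- the path
  set L1 : ℝ := ‖m - x‖ with hL1def
  set L2 : ℝ := ‖y - m‖ with hL2def
  have hL1 : 0 < L1 := by rw [hL1def]; exact norm_pos_iff.mpr (sub_ne_zero.mpr hmx_ne)
  have hL2 : 0 < L2 := by
    rw [hL2def]
    exact norm_pos_iff.mpr (sub_ne_zero.mpr (fun h => hmy_ne h.symm))
  set γ : ℝ → EuclideanSpace ℝ (Fin d) := fun t =>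
    if t ≤ L1 then x + (L1⁻¹ * t) • (m - x) else m + (L2⁻¹ * (t - L1)) • (y - m) with hγdef
  have hjoin : ∀ t : ℝ, t = L1 →
      x + (L1⁻¹ * t) • (m - x) = m + (L2⁻¹ * (t - L1)) • (y - m) := by
    intro t ht
    rw [ht]
    rw [inv_mul_cancel₀ hL1.ne', one_smul, sub_self, mul_zero, zero_smul, add_zero]
    abel
  have hγcont : Continuous γ := by
    rw [hγdef]
    refine Continuous.if_le ?_ ?_ continuous_id continuous_const hjoin
    · exact continuous_const.add ((continuous_const.mul continuous_id).smul continuous_const)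
    · exact continuous_const.add ((continuous_const.mul
        (continuous_id.sub continuous_const)).smul continuous_const)
  have hγ0 : γ 0 = x := by
    rw [hγdef]
    simp only [if_pos hL1.le, mul_zero, zero_smul, add_zero]
  have hγb : γ (L1 + L2) = y := by
    rw [hγdef]
    simp only
    rw [if_neg (by linarith)]
    rw [add_sub_cancel_left, inv_mul_cancel₀ hL2.ne', one_smul]
    abel
  have hnorm1 : ∀ c : ℝ, ‖c • (m - x)‖ = |c| * L1 := fun c => by
    rw [norm_smul, Real.norm_eq_abs, hL1def]
  have hnorm2 : ∀ c : ℝ, ‖c • (y - m)‖ = |c| * L2 := fun c => by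
    rw [norm_smul, Real.norm_eq_abs, hL2def]
  have hlip : ∀ s t, 0 ≤ s → s ≤ t → t ≤ L1 + L2 → ‖γ t - γ s‖ ≤ 1 * (t - s) := by
    intro s t hs hst htb
    rw [one_mul, hγdef]
    simp only
    by_cases hsL : s ≤ L1 <;> by_cases htL : t ≤ L1
    · rw [if_pos hsL, if_pos htL]
      have he : x + (L1⁻¹ * t) • (m - x) - (x + (L1⁻¹ * s) • (m - x))
          = (L1⁻¹ * (t - s)) • (m - x) := by
        rw [mul_sub, sub_smul]
        abel
      rw [he, hnorm1, abs_of_nonneg (mul_nonneg (inv_nonneg.mpr hL1.le) (sub_nonneg.mpr hst))]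
      rw [hL1def]
      field_simp
      exact le_of_eq (mul_div_cancel_left₀ _ hL1.ne')
    · rw [if_pos hsL, if_neg htL]
      push_neg at htL
      have he : m + (L2⁻¹ * (t - L1)) • (y - m) - (x + (L1⁻¹ * s) • (m - x))
          = (L2⁻¹ * (t - L1)) • (y - m) + (1 - L1⁻¹ * s) • (m - x) := by
        rw [sub_smul, one_smul]
        abel
      rw [he]
      calc ‖(L2⁻¹ * (t - L1)) • (y - m) + (1 - L1⁻¹ * s) • (m - x)‖
          ≤ ‖(L2⁻¹ * (t - L1)) • (y - m)‖ + ‖(1 - L1⁻¹ * s) • (m - x)‖ := norm_add_le _ _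
        _ ≤ (t - s) := by
            rw [hnorm1, hnorm2]
            rw [abs_of_nonneg (mul_nonneg (inv_nonneg.mpr hL2.le) (by linarith))]
            have hs1 : L1⁻¹ * s ≤ 1 := by
              rw [← inv_mul_cancel₀ hL1.ne']
              exact mul_le_mul_of_nonneg_left hsL (by positivity)
            rw [abs_of_nonneg (by linarith : (0:ℝ) ≤ 1 - L1⁻¹ * s)]
            have e1 : L2⁻¹ * (t - L1) * L2 = t - L1 := by field_simp
            have e2 : (1 - L1⁻¹ * s) * L1 = L1 - s := by field_simp
            rw [e1, e2]
            linarith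
    · exfalso; push_neg at hsL; linarith
    · rw [if_neg hsL, if_neg htL]
      push_neg at hsL
      have he : m + (L2⁻¹ * (t - L1)) • (y - m) - (m + (L2⁻¹ * (s - L1)) • (y - m))
          = (L2⁻¹ * (t - s)) • (y - m) := by
        rw [show t - L1 = (t - s) + (s - L1) by ring, mul_add, add_smul]
        abel
      rw [he, hnorm2, abs_of_nonneg (mul_nonneg (inv_nonneg.mpr hL2.le) (sub_nonneg.mpr hst))]
      field_simp
      exact le_rfl
  have himg : γ '' Icc 0 (L1 + L2) ⊆ seg x m ∪ seg y m := by
    rintro z ⟨t, ht, rfl⟩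
    rw [hγdef]
    simp only
    by_cases htL : t ≤ L1
    · left
      rw [if_pos htL]
      refine ⟨L1⁻¹ * t, ⟨mul_nonneg (inv_nonneg.mpr hL1.le) ht.1, ?_⟩, rfl⟩
      rw [← inv_mul_cancel₀ hL1.ne']
      exact mul_le_mul_of_nonneg_left htL (by positivity)
    · right
      push_neg at htL
      rw [if_neg (not_le.mpr htL)]
      set c : ℝ := L2⁻¹ * (t - L1) with hcdef
      have hc0 : 0 ≤ c := by
        rw [hcdef]; exact mul_nonneg (inv_nonneg.mpr hL2.le) (by linarith)
      have hc1 : c ≤ 1 := by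
        rw [hcdef, ← inv_mul_cancel₀ hL2.ne']
        exact mul_le_mul_of_nonneg_left (by linarith [ht.2] : t - L1 ≤ L2) (by positivity)
      refine ⟨1 - c, ⟨by linarith, by linarith⟩, ?_⟩
      module
  -- final assembly
  refine ⟨0, L1 + L2, γ, by linarith, hγcont.continuousOn, hγ0, hγb, ?_, ?_⟩
  · refine le_trans (pathLen_le_of_lip zero_le_one hlip) ?_
    refine ENNReal.ofReal_le_ofReal ?_
    rw [one_mul, sub_zero]
    have h1 : ‖y - m‖ = ‖m - y‖ := norm_sub_rev _ _
    calc L1 + L2 = ‖m - x‖ + ‖m - y‖ := by rw [hL1def, hL2def, h1]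
      _ ≤ (nv / 2 + ρ) + (nv / 2 + ρ) := add_le_add hmxnorm hmynorm
      _ ≤ R + δ := by rw [hRdef]; linarith
  · have hsub : γ '' Icc 0 (L1 + L2) ∩ Θ ⊆ (Θ ∩ seg x m) ∪ (Θ ∩ seg y m) := by
      rintro z ⟨hzim, hzΘ⟩
      rcases himg hzim with h | h
      · exact Or.inl ⟨hzΘ, h⟩
      · exact Or.inr ⟨hzΘ, h⟩
    have hclsub : closure (γ '' Icc 0 (L1 + L2) ∩ Θ) ⊆
        closure (Θ ∩ seg x m) ∪ closure (Θ ∩ seg y m) := by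
      rw [← closure_union]
      exact closure_mono hsub
    refine Set.Countable.mono hclsub ?_
    refine Set.Countable.union ?_ ?_
    · exact (Set.Countable.mono hsidex.2 (hsidex.1.union (countable_singleton x)))
    · exact (Set.Countable.mono hsidey.2 (hsidey.1.union (countable_singleton y)))


end Main
end

section
/- Let d ∈ ℕ and c > 0. Then there exists q > 0 such that every set Θ ⊆ ℝ^d which has Nagata dimension at most d−1 with constant c is q-porous. -/
namespace Por


abbrev Gpt (k M : ℕ) := Fin k → Fin (M+1)
abbrev Spx (k M : ℕ) := (Fin k → Fin M) × Equiv.Perm (Fin k)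

def vert {k M : ℕ} (s : Spx k M) (j : Fin (k+1)) : Gpt k M :=
  fun i => ⟨(s.1 i : ℕ) + (if ((s.2.symm i : ℕ) < (j : ℕ)) then 1 else 0), by
    have := (s.1 i).isLt; split <;> omega⟩

def rainbow {k M : ℕ} (lab : Gpt k M → Fin (k+1)) (s : Spx k M) : Prop :=
  ∀ m : Fin (k+1), ∃ j : Fin (k+1), lab (vert s j) = m

def door {k M : ℕ} (lab : Gpt k M → Fin (k+1)) (s : Spx k M) (j : Fin (k+1)) : Prop :=
  ∀ m : Fin (k+1), m ≠ 0 → ∃ j', j' ≠ j ∧ lab (vert s j') = m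

instance {k M : ℕ} (lab : Gpt k M → Fin (k+1)) (s : Spx k M) : Decidable (rainbow lab s) := by
  unfold rainbow; infer_instance

instance {k M : ℕ} (lab : Gpt k M → Fin (k+1)) (s : Spx k M) (j : Fin (k+1)) :
    Decidable (door lab s j) := by
  unfold door; infer_instance

lemma doors_card {k M : ℕ} (lab : Gpt k M → Fin (k+1)) (s : Spx k M) :
    (((Finset.univ.filter (fun j => door lab s j)).card : ZMod 2))
      = if rainbow lab s then 1 else 0 := by
  classical
  by_cases hr : rainbow lab s
  · have hsurj : Function.Surjective (fun j => lab (vert s j)) := fun m => hr m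
    have hinj : Function.Injective (fun j => lab (vert s j)) :=
      (Finite.injective_iff_surjective).mpr hsurj
    obtain ⟨j₀, hj₀⟩ := hsurj 0
    have : Finset.univ.filter (fun j => door lab s j) = {j₀} := by
      ext j
      simp only [Finset.mem_filter, Finset.mem_univ, true_and, Finset.mem_singleton]
      constructor
      · intro hd
        by_contra hne
        have hfj : lab (vert s j) ≠ 0 := fun h0 => hne (hinj (h0.trans hj₀.symm))
        obtain ⟨j', hj'ne, hj'⟩ := hd (lab (vert s j)) hfj
        exact hj'ne (hinj hj')
      · rintro rfl
        intro m hm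
        obtain ⟨j', hj'⟩ := hsurj m
        refine ⟨j', fun h => hm ?_, hj'⟩
        rw [← hj', h, hj₀]
    rw [this]; simp [hr]
  · simp only [hr, if_false]
    by_cases hd : ∃ j, door lab s j
    · obtain ⟨j, hj⟩ := hd
      have hno0 : ∀ j', lab (vert s j') ≠ 0 := by
        intro j' h0
        apply hr
        intro m
        by_cases hm : m = 0
        · exact ⟨j', by rw [hm]; exact h0⟩
        · obtain ⟨j'', _, hj''⟩ := hj m hm; exact ⟨j'', hj''⟩
      -- map on the complement of j is surjective onto nonzero labels, hence injective
      have hinj' : ∀ j₁ j₂, j₁ ≠ j → j₂ ≠ j → lab (vert s j₁) = lab (vert s j₂) → j₁ = j₂ := by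
        have hcardeq : Fintype.card {j' : Fin (k+1) // j' ≠ j}
            = Fintype.card {m : Fin (k+1) // m ≠ 0} := by
          simp [Fintype.card_subtype_compl]
        set h : {j' : Fin (k+1) // j' ≠ j} → {m : Fin (k+1) // m ≠ 0} :=
          fun x => ⟨lab (vert s x.1), hno0 x.1⟩ with hh
        have hsurj : Function.Surjective h := by
          rintro ⟨m, hm⟩
          obtain ⟨j', hj'ne, hj'⟩ := hj m hm
          exact ⟨⟨j', hj'ne⟩, Subtype.ext hj'⟩
        have hbij : Function.Bijective h :=
          (Fintype.bijective_iff_surjective_and_card h).mpr ⟨hsurj, hcardeq⟩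
        intro j₁ j₂ h₁ h₂ heq
        have := hbij.1 (a₁ := ⟨j₁, h₁⟩) (a₂ := ⟨j₂, h₂⟩) (Subtype.ext heq)
        exact congrArg Subtype.val this
      obtain ⟨j₁, hj₁ne, hj₁⟩ := hj (lab (vert s j)) (hno0 j)
      have hdoor1 : door lab s j₁ := by
        intro m hm
        by_cases hmf : m = lab (vert s j₁)
        · exact ⟨j, fun hc => hj₁ne hc.symm, by rw [hmf, hj₁]⟩
        · obtain ⟨j', hj'ne, hj'⟩ := hj m hm
          refine ⟨j', fun hc => hmf ?_, hj'⟩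
          rw [← hj', hc]
      have hset : Finset.univ.filter (fun j' => door lab s j') = {j, j₁} := by
        ext j₂
        simp only [Finset.mem_filter, Finset.mem_univ, true_and, Finset.mem_insert,
          Finset.mem_singleton]
        constructor
        · intro hd2
          by_contra hne
          push_neg at hne
          obtain ⟨hne1, hne2⟩ := hne
          obtain ⟨j', hj'ne, hj'⟩ := hd2 (lab (vert s j₂)) (hno0 j₂)
          by_cases hj'j : j' = j
          · subst hj'j
            exact hne2 (hinj' j₂ j₁ hne1 hj₁ne (hj'.symm.trans hj₁.symm))
          · exact hj'ne (hinj' j' j₂ hj'j hne1 hj')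
        · intro h
          rcases h with rfl | rfl
          · exact hj
          · exact hdoor1
      rw [hset]
      rw [Finset.card_insert_of_notMem (by simp only [Finset.mem_singleton]; exact fun h => hj₁ne h.symm), Finset.card_singleton]
      decide
    · push_neg at hd
      have : Finset.univ.filter (fun j => door lab s j) = ∅ := by
        ext j; simp [hd j]
      rw [this]; simp


def topIdxSet {k M : ℕ} (x : Gpt k M) : Finset (Fin k) :=
  Finset.univ.filter (fun i => (x i : ℕ) = M)

def nu {k M : ℕ} (x : Gpt k M) : Fin (k+1) :=
  if h : (topIdxSet x).Nonempty then ((topIdxSet x).min' h).succ else 0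

def H0 {k M : ℕ} (lab : Gpt k M → Fin (k+1)) : Prop :=
  ∀ x (i : Fin k), (x i : ℕ) = 0 → lab x ≠ i.succ
def H1 {k M : ℕ} (lab : Gpt k M → Fin (k+1)) : Prop :=
  ∀ x : Gpt k M, (topIdxSet x).Nonempty → lab x = nu x

/-- total door count has the parity of the rainbow count -/
lemma card_pairs {k M : ℕ} (lab : Gpt k M → Fin (k+1)) :
    (((Finset.univ.filter (fun p : Spx k M × Fin (k+1) => door lab p.1 p.2)).card : ZMod 2))
      = ((Finset.univ.filter (fun s : Spx k M => rainbow lab s)).card : ZMod 2) := by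
  classical
  rw [Finset.card_eq_sum_card_fiberwise
    (f := Prod.fst) (t := (Finset.univ : Finset (Spx k M))) (fun x _ => Finset.mem_univ _)]
  have hfib : ∀ s : Spx k M,
      ((Finset.univ.filter (fun p : Spx k M × Fin (k+1) => door lab p.1 p.2)).filter
        (fun p => p.1 = s)).card = (Finset.univ.filter (fun j => door lab s j)).card := by
    intro s
    apply Finset.card_nbij' (i := fun p => p.2) (j := fun j => (s, j))
    · rintro ⟨s', j⟩ hp
      simp only [Finset.mem_coe, Finset.mem_filter, Finset.mem_univ, true_and] at hp ⊢
      obtain ⟨hd, rfl⟩ := hp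
      exact hd
    · intro j hj
      refine Finset.mem_filter.mpr ⟨Finset.mem_filter.mpr ⟨Finset.mem_univ _, ?_⟩, rfl⟩
      simpa using hj
    · rintro ⟨s', j⟩ hp
      simp only [Finset.mem_coe, Finset.mem_filter, Finset.mem_univ, true_and] at hp
      rw [hp.2]
    · intro j hj; rfl
  push_cast
  calc (∑ s : Spx k M, (((Finset.univ.filter (fun p : Spx k M × Fin (k+1) => door lab p.1 p.2)).filter
        (fun p => p.1 = s)).card : ZMod 2))
      = ∑ s : Spx k M, ((Finset.univ.filter (fun j => door lab s j)).card : ZMod 2) := by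
        refine Finset.sum_congr rfl (fun s _ => ?_); exact_mod_cast congrArg _ (hfib s)
    _ = ∑ s : Spx k M, (if rainbow lab s then (1:ZMod 2) else 0) := by
        refine Finset.sum_congr rfl (fun s _ => ?_); exact doors_card lab s
    _ = ((Finset.univ.filter (fun s : Spx k M => rainbow lab s)).card : ZMod 2) := by
        rw [Finset.sum_boole]


/-- middle pivot: swap two consecutive steps -/
def pivotMid {k M : ℕ} (s : Spx (k+1) M) (j : Fin (k+2)) (h0 : j ≠ 0)
    (hl : j ≠ Fin.last (k+1)) : Spx (k+1) M :=
  (s.1, (Equiv.swap (j.pred h0) (j.castPred hl)).trans s.2)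

def pivotUp {k M : ℕ} (s : Spx (k+1) M) (h : (s.1 (s.2 0) : ℕ) + 1 < M) : Spx (k+1) M :=
  (fun i => if hi : i = s.2 0 then ⟨(s.1 i : ℕ) + 1, by rw [hi]; exact h⟩ else s.1 i,
   (finRotate (k+1)).trans s.2)

def pivotDown {k M : ℕ} (s : Spx (k+1) M) (h : (s.1 (s.2 (Fin.last k)) : ℕ) ≠ 0) : Spx (k+1) M :=
  (fun i => if hi : i = s.2 (Fin.last k) then ⟨(s.1 i : ℕ) - 1, by have := (s.1 i).isLt; omega⟩
    else s.1 i,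
   ((finRotate (k+1)).symm).trans s.2)


lemma pivotUp_fst_val {k M : ℕ} (s : Spx (k+1) M) (h : (s.1 (s.2 0) : ℕ) + 1 < M)
    (i : Fin (k+1)) :
    ((pivotUp s h).1 i : ℕ) = if i = s.2 0 then (s.1 i : ℕ) + 1 else (s.1 i : ℕ) := by
  simp only [pivotUp]
  split
  · next hc => simp [hc]
  · next hc => simp [hc]

lemma pivotDown_fst_val {k M : ℕ} (s : Spx (k+1) M) (h : (s.1 (s.2 (Fin.last k)) : ℕ) ≠ 0)
    (i : Fin (k+1)) :
    ((pivotDown s h).1 i : ℕ)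
      = if i = s.2 (Fin.last k) then (s.1 i : ℕ) - 1 else (s.1 i : ℕ) := by
  simp only [pivotDown]
  split
  · next hc => simp [hc]
  · next hc => simp [hc]

lemma vert_pivotMid {k M : ℕ} (s : Spx (k+1) M) (j l : Fin (k+2)) (h0 : j ≠ 0)
    (hl : j ≠ Fin.last (k+1)) (hne : l ≠ j) :
    vert (pivotMid s j h0 hl) l = vert s l := by
  funext i
  apply Fin.ext
  show (s.1 i : ℕ) + _ = (s.1 i : ℕ) + _
  congr 1
  refine if_congr ?_ rfl rfl
  have hsy2 : ((pivotMid s j h0 hl).2.symm i : ℕ)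
      = ((Equiv.swap (j.pred h0) (j.castPred hl)) (s.2.symm i) : ℕ) := by
    have he : (pivotMid s j h0 hl).2 = (Equiv.swap (j.pred h0) (j.castPred hl)).trans s.2 := rfl
    rw [he, Equiv.symm_trans_apply, Equiv.symm_swap]
  rw [hsy2]
  have hjv : (l : ℕ) ≠ (j : ℕ) := fun h => hne (Fin.ext h)
  have hj0 : (j : ℕ) ≠ 0 := Fin.val_ne_zero_iff.mpr h0
  have ha : ((j.pred h0 : Fin (k+1)) : ℕ) = (j : ℕ) - 1 := Fin.coe_pred _ _
  have hb : ((j.castPred hl : Fin (k+1)) : ℕ) = (j : ℕ) := Fin.coe_castPred _ _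
  rcases eq_or_ne (s.2.symm i) (j.pred h0) with ht | hta
  · rw [ht, Equiv.swap_apply_left, ha, hb]
    omega
  · rcases eq_or_ne (s.2.symm i) (j.castPred hl) with ht | htb
    · rw [ht, Equiv.swap_apply_right, ha, hb]
      omega
    · rw [Equiv.swap_apply_of_ne_of_ne hta htb]

lemma pivotMid_pivotMid {k M : ℕ} (s : Spx (k+1) M) (j : Fin (k+2)) (h0 : j ≠ 0)
    (hl : j ≠ Fin.last (k+1)) :
    pivotMid (pivotMid s j h0 hl) j h0 hl = s := by
  unfold pivotMid
  refine Prod.ext rfl ?_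
  ext x
  simp [Equiv.swap_apply_self]

lemma pivotMid_ne {k M : ℕ} (s : Spx (k+1) M) (j : Fin (k+2)) (h0 : j ≠ 0)
    (hl : j ≠ Fin.last (k+1)) : pivotMid s j h0 hl ≠ s := by
  intro h
  have h2 := congrArg Prod.snd h
  simp only [pivotMid] at h2
  have := congrArg (fun (e : Equiv.Perm (Fin (k+1))) => e (j.pred h0)) h2
  simp only [Equiv.trans_apply, Equiv.swap_apply_left] at this
  have heq : j.castPred hl = j.pred h0 := s.2.injective this
  have ha : ((j.pred h0 : Fin (k+1)) : ℕ) = (j : ℕ) - 1 := Fin.coe_pred _ _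
  have hb : ((j.castPred hl : Fin (k+1)) : ℕ) = (j : ℕ) := Fin.coe_castPred _ _
  have hj0 : (j : ℕ) ≠ 0 := Fin.val_ne_zero_iff.mpr h0
  rw [Fin.ext_iff, hb, ha] at heq
  omega

lemma pivotUp_snd_last {k M : ℕ} (s : Spx (k+1) M) (h : (s.1 (s.2 0) : ℕ) + 1 < M) :
    (pivotUp s h).2 (Fin.last k) = s.2 0 := by
  simp only [pivotUp, Equiv.trans_apply]
  congr 1
  rw [finRotate_succ_apply, Fin.last_add_one]

lemma pivotDown_snd_zero {k M : ℕ} (s : Spx (k+1) M) (h : (s.1 (s.2 (Fin.last k)) : ℕ) ≠ 0) :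
    (pivotDown s h).2 0 = s.2 (Fin.last k) := by
  have he : (pivotDown s h).2 0 = s.2 ((finRotate (k+1)).symm 0) := rfl
  rw [he]
  congr 1

lemma pivotDown_pivotUp {k M : ℕ} (s : Spx (k+1) M) (h : (s.1 (s.2 0) : ℕ) + 1 < M)
    (h' : ((pivotUp s h).1 ((pivotUp s h).2 (Fin.last k)) : ℕ) ≠ 0) :
    pivotDown (pivotUp s h) h' = s := by
  refine Prod.ext ?_ ?_
  · funext i
    apply Fin.ext
    rw [pivotDown_fst_val, pivotUp_snd_last, pivotUp_fst_val]
    by_cases hi : i = s.2 0 <;> simp [hi]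
  · show ((finRotate (k+1)).symm).trans ((finRotate (k+1)).trans s.2) = s.2
    apply Equiv.ext
    intro x
    rw [Equiv.trans_apply, Equiv.trans_apply, Equiv.apply_symm_apply]

lemma pivotUp_pivotDown {k M : ℕ} (s : Spx (k+1) M) (h : (s.1 (s.2 (Fin.last k)) : ℕ) ≠ 0)
    (h' : ((pivotDown s h).1 ((pivotDown s h).2 0) : ℕ) + 1 < M) :
    pivotUp (pivotDown s h) h' = s := by
  refine Prod.ext ?_ ?_
  · funext i
    apply Fin.ext
    rw [pivotUp_fst_val, pivotDown_snd_zero, pivotDown_fst_val]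
    by_cases hi : i = s.2 (Fin.last k)
    · simp only [hi, if_pos]
      have : (s.1 (s.2 (Fin.last k)) : ℕ) ≠ 0 := h
      omega
    · simp [hi]
  · show ((finRotate (k+1))).trans (((finRotate (k+1)).symm).trans s.2) = s.2
    apply Equiv.ext
    intro x
    rw [Equiv.trans_apply, Equiv.trans_apply, Equiv.symm_apply_apply]

lemma vert_pivotUp {k M : ℕ} (s : Spx (k+1) M) (h : (s.1 (s.2 0) : ℕ) + 1 < M)
    (l : Fin (k+2)) (hl : l ≠ Fin.last (k+1)) :
    vert (pivotUp s h) l = vert s (l + 1) := by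
  funext i
  apply Fin.ext
  have hlv : ((l + 1 : Fin (k+2)) : ℕ) = (l : ℕ) + 1 := by
    rw [Fin.val_add_one]; simp [hl]
  have hsymm : (((pivotUp s h).2.symm i) : ℕ) = ((finRotate (k+1)).symm (s.2.symm i) : ℕ) := by
    have he : (pivotUp s h).2 = (finRotate (k+1)).trans s.2 := rfl
    rw [he, Equiv.symm_trans_apply]
  show ((pivotUp s h).1 i : ℕ) + _ = (s.1 i : ℕ) + _
  rw [pivotUp_fst_val]
  have hcond1 : ((((pivotUp s h).2.symm i) : ℕ) < (l : ℕ))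
      ↔ (((finRotate (k+1)).symm (s.2.symm i) : ℕ) < (l : ℕ)) := by rw [hsymm]
  have hcond2 : (((s.2.symm i) : ℕ) < ((l + 1 : Fin (k+2)) : ℕ))
      ↔ (((s.2.symm i) : ℕ) < (l : ℕ) + 1) := by rw [hlv]
  rw [if_congr hcond1 rfl rfl, if_congr hcond2 rfl rfl]
  have hlk : (l : ℕ) < k + 1 := by
    have h1 := l.isLt
    have h2 : (l : ℕ) ≠ k + 1 := by simpa [Fin.ext_iff, Fin.last] using hl
    omega
  rcases eq_or_ne (s.2.symm i) 0 with ht | ht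
  · have hi : i = s.2 0 := by rw [← ht]; simp
    have hrot : ((finRotate (k+1)).symm (s.2.symm i) : ℕ) = k := by
      rw [ht]
      have hz : (finRotate (k+1)) (Fin.last k) = 0 := by
        rw [finRotate_succ_apply]; exact Fin.last_add_one k
      rw [← hz, Equiv.symm_apply_apply]
      simp [Fin.last]
    rw [if_pos hi, hrot, ht]
    simp only [Fin.val_zero]
    have c1 : ¬ ((k:ℕ) < (l:ℕ)) := by omega
    have c2 : (0:ℕ) < (l:ℕ) + 1 := by omega
    rw [if_neg c1]; simp
  · have hi : i ≠ s.2 0 := by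
      intro hc; apply ht; rw [hc]; simp
    rw [if_neg hi]
    set u := (finRotate (k+1)).symm (s.2.symm i) with hu
    have hfu : finRotate (k+1) u = s.2.symm i := by rw [hu]; simp
    have huv : (s.2.symm i : ℕ) = (u : ℕ) + 1 := by
      rw [← hfu, finRotate_succ_apply, Fin.val_add_one]
      split
      · next heq =>
        exfalso; apply ht
        rw [← hfu, heq, finRotate_succ_apply]
        exact Fin.last_add_one k
      · rfl
    rw [huv]
    have hiff : ((u:ℕ) < (l:ℕ)) ↔ ((u:ℕ)+1 < (l:ℕ)+1) := by omega
    rw [if_congr hiff rfl rfl]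


section DoorTransfer

variable {k M : ℕ} (lab : Gpt (k+1) M → Fin (k+2))

lemma door_pivotMid {s : Spx (k+1) M} {j : Fin (k+2)} (h0 : j ≠ 0) (hl : j ≠ Fin.last (k+1))
    (hd : door lab s j) : door lab (pivotMid s j h0 hl) j := by
  intro m hm
  obtain ⟨j', hj'ne, hj'⟩ := hd m hm
  exact ⟨j', hj'ne, by rw [vert_pivotMid s j j' h0 hl hj'ne]; exact hj'⟩

lemma door_pivotUp {s : Spx (k+1) M} (h : (s.1 (s.2 0) : ℕ) + 1 < M)
    (hd : door lab s 0) : door lab (pivotUp s h) (Fin.last (k+1)) := by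
  intro m hm
  obtain ⟨j', hj'ne, hj'⟩ := hd m hm
  have hj'v : (j' : ℕ) ≠ 0 := Fin.val_ne_zero_iff.mpr hj'ne
  set l : Fin (k+2) := (j'.pred hj'ne).castSucc with hldef
  have hlval : (l : ℕ) = (j' : ℕ) - 1 := by
    rw [hldef, Fin.coe_castSucc, Fin.coe_pred]
  have hlne : l ≠ Fin.last (k+1) := by
    have : (l : ℕ) < k + 1 := by
      have := (j'.pred hj'ne).isLt
      simpa [hldef] using this
    intro hc
    rw [hc] at this
    simp [Fin.last] at this
  have hl1 : l + 1 = j' := by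
    apply Fin.ext
    rw [Fin.val_add_one, if_neg hlne, hlval]
    omega
  refine ⟨l, ?_, ?_⟩
  · intro hc
    rw [hc] at hlval
    simp [Fin.last] at hlval
    have := j'.isLt
    omega
  · rw [vert_pivotUp s h l hlne, hl1]
    exact hj'

lemma door_pivotDown {s : Spx (k+1) M} (h : (s.1 (s.2 (Fin.last k)) : ℕ) ≠ 0)
    (hd : door lab s (Fin.last (k+1))) : door lab (pivotDown s h) 0 := by
  intro m hm
  obtain ⟨j', hj'ne, hj'⟩ := hd m hm
  have hup : ((pivotDown s h).1 ((pivotDown s h).2 0) : ℕ) + 1 < M := by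
    rw [pivotDown_snd_zero, pivotDown_fst_val, if_pos rfl]
    have := (s.1 (s.2 (Fin.last k))).isLt
    omega
  have hs : pivotUp (pivotDown s h) hup = s := pivotUp_pivotDown s h hup
  have hj'l : (j' : ℕ) < k + 1 := by
    have h1 := j'.isLt
    have h2 : (j' : ℕ) ≠ k + 1 := by simpa [Fin.ext_iff, Fin.last] using hj'ne
    omega
  have hj'ne' : j' ≠ Fin.last (k+1) := hj'ne
  have hv : vert s j' = vert (pivotDown s h) (j' + 1) := by
    conv_lhs => rw [← hs]
    rw [vert_pivotUp (pivotDown s h) hup j' hj'ne']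
  refine ⟨j' + 1, ?_, ?_⟩
  · intro hc
    have : ((j' + 1 : Fin (k+2)) : ℕ) = 0 := by rw [hc]; rfl
    rw [Fin.val_add_one, if_neg hj'ne'] at this
    omega
  · rw [← hv]; exact hj'

end DoorTransfer

section Involution

variable {k M : ℕ}

def Bdry (p : Spx (k+1) M × Fin (k+2)) : Prop :=
  (p.2 = 0 ∧ (p.1.1 (p.1.2 0) : ℕ) + 1 = M) ∨
  (p.2 = Fin.last (k+1) ∧ (p.1.1 (p.1.2 (Fin.last k)) : ℕ) = 0)

instance (p : Spx (k+1) M × Fin (k+2)) : Decidable (Bdry p) := by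
  unfold Bdry; infer_instance

noncomputable def Inv (p : Spx (k+1) M × Fin (k+2)) : Spx (k+1) M × Fin (k+2) :=
  if h0 : p.2 = 0 then
    if htop : (p.1.1 (p.1.2 0) : ℕ) + 1 = M then p
    else (pivotUp p.1 (by have := (p.1.1 (p.1.2 0)).isLt; omega), Fin.last (k+1))
  else if hl : p.2 = Fin.last (k+1) then
    if hbot : (p.1.1 (p.1.2 (Fin.last k)) : ℕ) = 0 then p
    else (pivotDown p.1 hbot, 0)
  else (pivotMid p.1 p.2 h0 hl, p.2)

lemma last_ne_zero' : (Fin.last (k+1) : Fin (k+2)) ≠ 0 := by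
  simp [Fin.ext_iff, Fin.last]

lemma Inv_invol (p : Spx (k+1) M × Fin (k+2)) : Inv (Inv p) = p := by
  rcases p with ⟨s, j⟩
  by_cases h0 : j = 0
  · subst h0
    by_cases htop : (s.1 (s.2 0) : ℕ) + 1 = M
    · have e0 : Inv (s, (0 : Fin (k+2))) = (s, 0) := by
        simp only [Inv, dif_pos rfl, dif_pos htop]
        exact dif_pos trivial
      rw [e0, e0]
    · have hup : (s.1 (s.2 0) : ℕ) + 1 < M := by have := (s.1 (s.2 0)).isLt; omega
      have e1 : Inv (s, (0 : Fin (k+2))) = (pivotUp s hup, Fin.last (k+1)) := by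
        simp only [Inv, dif_pos rfl, dif_neg htop]
        exact dif_pos trivial
      rw [e1]
      have hbot' : ((pivotUp s hup).1 ((pivotUp s hup).2 (Fin.last k)) : ℕ) ≠ 0 := by
        rw [pivotUp_snd_last, pivotUp_fst_val, if_pos rfl]
        omega
      have e2 : Inv (pivotUp s hup, Fin.last (k+1)) = (pivotDown (pivotUp s hup) hbot', 0) := by
        simp only [Inv, dif_neg last_ne_zero', dif_pos rfl, dif_neg hbot']
        exact dif_pos trivial
      rw [e2, pivotDown_pivotUp]
  · by_cases hl : j = Fin.last (k+1)
    · subst hl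
      by_cases hbot : (s.1 (s.2 (Fin.last k)) : ℕ) = 0
      · have e0 : Inv (s, (Fin.last (k+1) : Fin (k+2))) = (s, Fin.last (k+1)) := by
          simp only [Inv, dif_neg last_ne_zero', dif_pos rfl, dif_pos hbot]
          exact dif_pos trivial
        rw [e0, e0]
      · have e1 : Inv (s, (Fin.last (k+1) : Fin (k+2))) = (pivotDown s hbot, 0) := by
          simp only [Inv, dif_neg last_ne_zero', dif_pos rfl, dif_neg hbot]
          exact dif_pos trivial
        rw [e1]
        have htop' : ((pivotDown s hbot).1 ((pivotDown s hbot).2 0) : ℕ) + 1 ≠ M := by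
          rw [pivotDown_snd_zero, pivotDown_fst_val, if_pos rfl]
          have := (s.1 (s.2 (Fin.last k))).isLt
          omega
        have hup' : ((pivotDown s hbot).1 ((pivotDown s hbot).2 0) : ℕ) + 1 < M := by
          have := ((pivotDown s hbot).1 ((pivotDown s hbot).2 0)).isLt
          omega
        have e2 : Inv (pivotDown s hbot, (0 : Fin (k+2)))
            = (pivotUp (pivotDown s hbot) hup', Fin.last (k+1)) := by
          simp only [Inv, dif_pos rfl, dif_neg htop']
          exact dif_pos trivial
        rw [e2, pivotUp_pivotDown]
    · have e1 : Inv (s, j) = (pivotMid s j h0 hl, j) := by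
        simp only [Inv, dif_neg h0, dif_neg hl]
      rw [e1]
      have e2 : Inv (pivotMid s j h0 hl, j) = (pivotMid (pivotMid s j h0 hl) j h0 hl, j) := by
        simp only [Inv, dif_neg h0, dif_neg hl]
      rw [e2, pivotMid_pivotMid]

end Involution

section InvolutionParity

variable {k M : ℕ} (lab : Gpt (k+1) M → Fin (k+2))

lemma Inv_bdry_fixed (p : Spx (k+1) M × Fin (k+2)) (hb : Bdry p) : Inv p = p := by
  rcases p with ⟨s, j⟩
  rcases hb with ⟨hj, hc⟩ | ⟨hj, hc⟩
  · subst hj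
    simp only [Inv, dif_pos rfl, dif_pos hc]
    exact dif_pos trivial
  · subst hj
    simp only [Inv, dif_neg last_ne_zero', dif_pos rfl, dif_pos hc]
    exact dif_pos trivial

lemma Inv_eq_up {s : Spx (k+1) M} (htop : ¬ (s.1 (s.2 0) : ℕ) + 1 = M)
    (hup : (s.1 (s.2 0) : ℕ) + 1 < M) :
    Inv (s, (0 : Fin (k+2))) = (pivotUp s hup, Fin.last (k+1)) := by
  simp only [Inv, dif_pos rfl, dif_neg htop]
  exact dif_pos trivial

lemma Inv_eq_down {s : Spx (k+1) M} (hbot : ¬ (s.1 (s.2 (Fin.last k)) : ℕ) = 0) :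
    Inv (s, (Fin.last (k+1) : Fin (k+2))) = (pivotDown s hbot, 0) := by
  simp only [Inv, dif_neg last_ne_zero', dif_pos rfl, dif_neg hbot]
  exact dif_pos trivial

lemma Inv_eq_mid {s : Spx (k+1) M} {j : Fin (k+2)} (h0 : j ≠ 0) (hl : j ≠ Fin.last (k+1)) :
    Inv (s, j) = (pivotMid s j h0 hl, j) := by
  simp only [Inv, dif_neg h0, dif_neg hl]

lemma Inv_door (p : Spx (k+1) M × Fin (k+2)) (hd : door lab p.1 p.2) :
    door lab (Inv p).1 (Inv p).2 := by
  rcases p with ⟨s, j⟩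
  by_cases h0 : j = 0
  · subst h0
    by_cases htop : (s.1 (s.2 0) : ℕ) + 1 = M
    · have := Inv_bdry_fixed (s, (0:Fin (k+2))) (Or.inl ⟨rfl, htop⟩)
      rw [this]; exact hd
    · have hup : (s.1 (s.2 0) : ℕ) + 1 < M := by have := (s.1 (s.2 0)).isLt; omega
      rw [Inv_eq_up htop hup]
      exact door_pivotUp lab hup hd
  · by_cases hl : j = Fin.last (k+1)
    · subst hl
      by_cases hbot : (s.1 (s.2 (Fin.last k)) : ℕ) = 0
      · have := Inv_bdry_fixed (s, (Fin.last (k+1):Fin (k+2))) (Or.inr ⟨rfl, hbot⟩)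
        rw [this]; exact hd
      · rw [Inv_eq_down hbot]
        exact door_pivotDown lab hbot hd
    · rw [Inv_eq_mid h0 hl]
      exact door_pivotMid lab h0 hl hd

lemma Inv_ne (p : Spx (k+1) M × Fin (k+2)) (hb : ¬ Bdry p) : Inv p ≠ p := by
  rcases p with ⟨s, j⟩
  by_cases h0 : j = 0
  · subst h0
    have htop : ¬ (s.1 (s.2 0) : ℕ) + 1 = M := fun hc => hb (Or.inl ⟨rfl, hc⟩)
    have hup : (s.1 (s.2 0) : ℕ) + 1 < M := by have := (s.1 (s.2 0)).isLt; omega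
    rw [Inv_eq_up htop hup]
    intro hc
    exact last_ne_zero' (congrArg Prod.snd hc)
  · by_cases hl : j = Fin.last (k+1)
    · subst hl
      have hbot : ¬ (s.1 (s.2 (Fin.last k)) : ℕ) = 0 := fun hc => hb (Or.inr ⟨rfl, hc⟩)
      rw [Inv_eq_down hbot]
      intro hc
      exact last_ne_zero' (congrArg Prod.snd hc).symm
    · rw [Inv_eq_mid h0 hl]
      intro hc
      exact pivotMid_ne s j h0 hl (congrArg Prod.fst hc)

lemma Inv_not_bdry (p : Spx (k+1) M × Fin (k+2)) (hb : ¬ Bdry p) : ¬ Bdry (Inv p) := by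
  rcases p with ⟨s, j⟩
  by_cases h0 : j = 0
  · subst h0
    have htop : ¬ (s.1 (s.2 0) : ℕ) + 1 = M := fun hc => hb (Or.inl ⟨rfl, hc⟩)
    have hup : (s.1 (s.2 0) : ℕ) + 1 < M := by have := (s.1 (s.2 0)).isLt; omega
    rw [Inv_eq_up htop hup]
    rintro (⟨hj, -⟩ | ⟨-, hc⟩)
    · exact last_ne_zero' hj
    · rw [pivotUp_snd_last, pivotUp_fst_val, if_pos rfl] at hc
      omega
  · by_cases hl : j = Fin.last (k+1)
    · subst hl
      have hbot : ¬ (s.1 (s.2 (Fin.last k)) : ℕ) = 0 := fun hc => hb (Or.inr ⟨rfl, hc⟩)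
      rw [Inv_eq_down hbot]
      rintro (⟨-, hc⟩ | ⟨hj, -⟩)
      · rw [pivotDown_snd_zero, pivotDown_fst_val, if_pos rfl] at hc
        have := (s.1 (s.2 (Fin.last k))).isLt
        omega
      · exact last_ne_zero' hj.symm
    · rw [Inv_eq_mid h0 hl]
      rintro (⟨hj, -⟩ | ⟨hj, -⟩)
      · exact h0 hj
      · exact hl hj

lemma card_bdry_parity :
    (((Finset.univ.filter (fun p : Spx (k+1) M × Fin (k+2) => door lab p.1 p.2)).card : ZMod 2))
      = ((Finset.univ.filter
          (fun p : Spx (k+1) M × Fin (k+2) => door lab p.1 p.2 ∧ Bdry p)).card : ZMod 2) := by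
  classical
  set D := Finset.univ.filter (fun p : Spx (k+1) M × Fin (k+2) => door lab p.1 p.2) with hD
  have hsum : ∑ p ∈ D, (if Bdry p then (0 : ZMod 2) else 1) = 0 := by
    apply Finset.sum_involution (g := fun p _ => Inv p)
    · intro p hp
      by_cases hb : Bdry p
      · rw [Inv_bdry_fixed p hb]; simp [hb]
      · rw [if_neg hb, if_neg (Inv_not_bdry p hb)]; decide
    · intro p hp hf
      apply Inv_ne
      intro hb; rw [if_pos hb] at hf; exact hf rfl
    · intro p hp
      simp only [hD, Finset.mem_filter, Finset.mem_univ, true_and] at hp ⊢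
      exact Inv_door lab p hp
    · intro p hp
      exact Inv_invol p
  have h1 : ∀ p ∈ D, (1 : ZMod 2)
      = (if Bdry p then (1 : ZMod 2) else 0) + (if Bdry p then (0 : ZMod 2) else 1) := by
    intro p hp
    by_cases hb : Bdry p <;> simp [hb]
  calc ((D.card : ZMod 2))
      = ∑ p ∈ D, (1 : ZMod 2) := by simp
    _ = ∑ p ∈ D, ((if Bdry p then (1 : ZMod 2) else 0) + (if Bdry p then (0 : ZMod 2) else 1)) :=
        Finset.sum_congr rfl h1
    _ = (∑ p ∈ D, (if Bdry p then (1 : ZMod 2) else 0)) + ∑ p ∈ D, (if Bdry p then (0:ZMod 2) else 1) :=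
        Finset.sum_add_distrib
    _ = ∑ p ∈ D, (if Bdry p then (1 : ZMod 2) else 0) := by rw [hsum, add_zero]
    _ = ((D.filter Bdry).card : ZMod 2) := by rw [Finset.sum_boole]
    _ = _ := by rw [hD, Finset.filter_filter]

end InvolutionParity

section Reduction

variable {k M : ℕ}

lemma vert_val (s : Spx k M) (j : Fin (k+1)) (i : Fin k) :
    ((vert s j i : ℕ)) = (s.1 i : ℕ) + (if ((s.2.symm i : ℕ) < (j : ℕ)) then 1 else 0) := rfl

lemma vert_val_pi0 (s : Spx (k+1) M) (j : Fin (k+2)) :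
    ((vert s j (s.2 0) : ℕ)) = (s.1 (s.2 0) : ℕ) + (if 0 < (j : ℕ) then 1 else 0) := by
  rw [vert_val]
  congr 2
  rw [Equiv.symm_apply_apply]
  rfl

lemma vert_val_pilast (s : Spx (k+1) M) (j : Fin (k+2)) :
    ((vert s j (s.2 (Fin.last k)) : ℕ))
      = (s.1 (s.2 (Fin.last k)) : ℕ) + (if (k : ℕ) < (j : ℕ) then 1 else 0) := by
  rw [vert_val]
  congr 2
  rw [Equiv.symm_apply_apply]
  rfl

lemma no_bottom_door (lab : Gpt (k+1) M → Fin (k+2)) (h0 : H0 lab) (s : Spx (k+1) M)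
    (hd : door lab s (Fin.last (k+1))) (hz : (s.1 (s.2 (Fin.last k)) : ℕ) = 0) : False := by
  obtain ⟨j', hj'ne, hj'⟩ := hd ((s.2 (Fin.last k)).succ) (Fin.succ_ne_zero _)
  have hj'v : (j' : ℕ) ≤ k := by
    have h1 := j'.isLt
    have h2 : (j' : ℕ) ≠ k + 1 := by simpa [Fin.ext_iff, Fin.last] using hj'ne
    omega
  have hcoord : ((vert s j' (s.2 (Fin.last k)) : ℕ)) = 0 := by
    rw [vert_val_pilast, hz, if_neg (by omega)]
  exact h0 (vert s j') (s.2 (Fin.last k)) hcoord hj'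

lemma top_coord_M (s : Spx (k+1) M) (htop : (s.1 (s.2 0) : ℕ) + 1 = M) (j' : Fin (k+2))
    (hj' : j' ≠ 0) : (s.2 0) ∈ topIdxSet (vert s j') := by
  have hj'v : 0 < (j' : ℕ) := by
    have : (j' : ℕ) ≠ 0 := Fin.val_ne_zero_iff.mpr hj'
    omega
  simp only [topIdxSet, Finset.mem_filter, Finset.mem_univ, true_and]
  rw [vert_val_pi0, if_pos hj'v]
  omega

lemma top_door_pi0 (lab : Gpt (k+1) M → Fin (k+2)) (h1 : H1 lab) (s : Spx (k+1) M)
    (hd : door lab s 0) (htop : (s.1 (s.2 0) : ℕ) + 1 = M) : s.2 0 = Fin.last k := by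
  obtain ⟨j', hj'ne, hj'⟩ := hd ((Fin.last k).succ) (Fin.succ_ne_zero _)
  have hmem := top_coord_M s htop j' hj'ne
  have hne : (topIdxSet (vert s j')).Nonempty := ⟨_, hmem⟩
  have : lab (vert s j') = ((topIdxSet (vert s j')).min' hne).succ := by
    rw [h1 _ hne, nu, dif_pos hne]
  rw [this] at hj'
  have hmin : (topIdxSet (vert s j')).min' hne = Fin.last k := by
    exact Fin.succ_injective _ hj'
  have hle := Finset.min'_le _ _ hmem
  rw [hmin] at hle
  exact le_antisymm (Fin.le_last _) hle

/-- the label-value correspondence between levels -/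
def psi (v : Fin (k+1)) : Fin (k+2) := if v = 0 then Fin.last (k+1) else v.castSucc

lemma psi_ne_zero (v : Fin (k+1)) : psi v ≠ 0 := by
  unfold psi
  split
  · exact last_ne_zero'
  · next h =>
    exact Fin.castSucc_ne_zero_iff.mpr h

lemma psi_inj : Function.Injective (psi (k := k)) := by
  intro a b hab
  unfold psi at hab
  split at hab <;> split at hab
  · next ha hb => rw [ha,hb]
  · next ha hb =>
    exfalso
    have : (b : ℕ) < k + 1 := b.isLt
    have := congrArg Fin.val hab
    simp [Fin.last] at this
    omega
  · next ha hb =>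
    exfalso
    have : (a : ℕ) < k + 1 := a.isLt
    have := congrArg Fin.val hab
    simp [Fin.last] at this
    omega
  · next ha hb =>
    exact Fin.castSucc_injective _ hab

lemma psi_surj (m : Fin (k+2)) (hm : m ≠ 0) : ∃ v, psi v = m := by
  by_cases hl : m = Fin.last (k+1)
  · exact ⟨0, by simp [psi, hl]⟩
  · refine ⟨m.castPred hl, ?_⟩
    have hne : m.castPred hl ≠ 0 := by
      intro hc
      apply hm
      have := congrArg Fin.val hc
      rw [Fin.coe_castPred] at this
      exact Fin.ext this
    rw [psi, if_neg hne, Fin.castSucc_castPred]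

/-- extend a grid point by a top coordinate -/
def extendTop (y : Gpt k M) : Gpt (k+1) M :=
  fun i => if h : i = Fin.last k then ⟨M, by omega⟩
    else ⟨(y (i.castPred h) : ℕ), by have := (y (i.castPred h)).isLt; omega⟩

/-- raise a simplex one dimension, on the top face -/
noncomputable def up (hM : 0 < M) (t : Spx k M) : Spx (k+1) M :=
  (fun i => if h : i = Fin.last k then ⟨M-1, by omega⟩ else t.1 (i.castPred h),
   Equiv.ofBijective (fun pos => Fin.cases (Fin.last k) (fun l => (t.2 l).castSucc) pos)
     (by
      rw [← Finite.injective_iff_bijective]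
      intro a b hab
      induction a using Fin.cases with
      | zero =>
        induction b using Fin.cases with
        | zero => rfl
        | succ l =>
          exfalso
          simp only [Fin.cases_zero, Fin.cases_succ] at hab
          have := congrArg Fin.val hab
          simp [Fin.last] at this
          have := ((t.2 l)).isLt
          omega
      | succ a =>
        induction b using Fin.cases with
        | zero =>
          exfalso
          simp only [Fin.cases_zero, Fin.cases_succ] at hab
          have := congrArg Fin.val hab
          simp [Fin.last] at this
          have := ((t.2 a)).isLt
          omega
        | succ b =>
          simp only [Fin.cases_succ] at hab
          have := t.2.injective (Fin.castSucc_injective _ hab)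
          rw [this]))

lemma up_snd_zero (hM : 0 < M) (t : Spx k M) : (up hM t).2 0 = Fin.last k := by
  simp [up, Equiv.ofBijective_apply]

lemma up_snd_succ (hM : 0 < M) (t : Spx k M) (l : Fin k) :
    (up hM t).2 l.succ = (t.2 l).castSucc := by
  simp [up, Equiv.ofBijective_apply]

lemma up_fst_last (hM : 0 < M) (t : Spx k M) : ((up hM t).1 (Fin.last k) : ℕ) = M - 1 := by
  show ((if h : (Fin.last k) = Fin.last k then _ else _ : Fin M) : ℕ) = M - 1
  rw [dif_pos rfl]

lemma up_fst_ne (hM : 0 < M) (t : Spx k M) (i : Fin (k+1)) (h : i ≠ Fin.last k) :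
    (up hM t).1 i = t.1 (i.castPred h) := by
  show (if h' : i = Fin.last k then _ else _) = _
  rw [dif_neg h]

lemma up_symm_succ (hM : 0 < M) (t : Spx k M) (m : Fin k) :
    (up hM t).2.symm m.castSucc = (t.2.symm m).succ := by
  rw [Equiv.symm_apply_eq, up_snd_succ, Equiv.apply_symm_apply]

lemma up_symm_last (hM : 0 < M) (t : Spx k M) :
    (up hM t).2.symm (Fin.last k) = 0 := by
  rw [Equiv.symm_apply_eq, up_snd_zero]

lemma vert_up (hM : 0 < M) (t : Spx k M) (j : Fin (k+1)) :
    vert (up hM t) j.succ = extendTop (vert t j) := by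
  funext i
  apply Fin.ext
  by_cases h : i = Fin.last k
  · subst h
    have h1 : ((vert (up hM t) j.succ (Fin.last k)) : ℕ)
        = (M - 1) + (if (((up hM t).2.symm (Fin.last k) : ℕ)) < ((j.succ : Fin (k+2)) : ℕ)
            then 1 else 0) := by
      rw [vert_val, up_fst_last]
    have hcond : (((up hM t).2.symm (Fin.last k) : ℕ)) < ((j.succ : Fin (k+2)) : ℕ) := by
      rw [up_symm_last]
      rw [Fin.val_succ]
      simp
    rw [h1, if_pos hcond]
    have hext : ((extendTop (vert t j) (Fin.last k)) : ℕ) = M := by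
      rw [extendTop, dif_pos rfl]
    rw [hext]
    omega
  · set m := i.castPred h with hm
    have hi : i = m.castSucc := by rw [hm, Fin.castSucc_castPred]
    have h1 : ((vert (up hM t) j.succ i) : ℕ)
        = (t.1 m : ℕ) + (if (((up hM t).2.symm i : ℕ)) < ((j.succ : Fin (k+2)) : ℕ)
            then 1 else 0) := by
      rw [vert_val, up_fst_ne hM t i h]
    have h2 : ((up hM t).2.symm i) = (t.2.symm m).succ := by
      rw [hi, up_symm_succ]
    rw [h1, h2]
    have h3 : ((extendTop (vert t j) i) : ℕ) = ((vert t j m) : ℕ) := by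
      rw [extendTop, dif_neg h]
    rw [h3, vert_val]
    congr 1
    rw [Fin.val_succ, Fin.val_succ]
    have : ((t.2.symm m : ℕ) + 1 < (j : ℕ) + 1) ↔ ((t.2.symm m : ℕ) < (j : ℕ)) := by omega
    rw [if_congr this rfl rfl]

lemma monotone_castSucc : Monotone (Fin.castSucc : Fin k → Fin (k+1)) := by
  intro a b hab
  rw [Fin.le_def, Fin.coe_castSucc, Fin.coe_castSucc]
  rw [Fin.le_def] at hab
  exact hab

lemma topIdx_extendTop (y : Gpt k M) :
    topIdxSet (extendTop y) = insert (Fin.last k) ((topIdxSet y).image Fin.castSucc) := by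
  ext i
  simp only [topIdxSet, Finset.mem_filter, Finset.mem_univ, true_and, Finset.mem_insert,
    Finset.mem_image]
  by_cases h : i = Fin.last k
  · subst h
    simp only [true_or, iff_true]
    rw [extendTop, dif_pos rfl]
  · have h1 : ((extendTop y i) : ℕ) = (y (i.castPred h) : ℕ) := by
      rw [extendTop, dif_neg h]
    rw [h1]
    constructor
    · intro hv
      exact Or.inr ⟨i.castPred h, hv, Fin.castSucc_castPred _ _⟩
    · rintro (hc | ⟨m, hm, rfl⟩)
      · exact absurd hc h
      · rwa [Fin.castPred_castSucc]

lemma nu_extendTop (y : Gpt k M) : nu (extendTop y) = psi (nu y) := by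
  have hne : (topIdxSet (extendTop y)).Nonempty := by
    rw [topIdx_extendTop]
    exact ⟨Fin.last k, Finset.mem_insert_self _ _⟩
  rw [nu, dif_pos hne]
  by_cases h : (topIdxSet y).Nonempty
  · have himg : ((topIdxSet y).image Fin.castSucc).Nonempty := h.image _
    have hmin : (topIdxSet (extendTop y)).min' hne
        = ((topIdxSet y).min' h).castSucc := by
      apply le_antisymm
      · apply Finset.min'_le
        rw [topIdx_extendTop]
        exact Finset.mem_insert_of_mem (Finset.mem_image_of_mem _ (Finset.min'_mem _ _))
      · apply Finset.le_min'
        intro y' hy'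
        rw [topIdx_extendTop] at hy'
        rcases Finset.mem_insert.mp hy' with rfl | hy''
        · exact Fin.le_last _
        · obtain ⟨m, hm, rfl⟩ := Finset.mem_image.mp hy''
          exact monotone_castSucc (Finset.min'_le _ _ hm)
    rw [hmin]
    have hnuy : nu y = ((topIdxSet y).min' h).succ := by rw [nu, dif_pos h]
    rw [hnuy, psi, if_neg (Fin.succ_ne_zero _), Fin.succ_castSucc]
  · have himg : (topIdxSet y) = ∅ := Finset.not_nonempty_iff_eq_empty.mp h
    have hmin : (topIdxSet (extendTop y)).min' hne = Fin.last k := by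
      have h2 : ∀ z, z ∈ topIdxSet (extendTop y) → z = Fin.last k := by
        intro z hz
        rw [topIdx_extendTop, himg] at hz
        simpa using hz
      exact h2 _ (Finset.min'_mem _ hne)
    rw [hmin]
    have hnuy : nu y = 0 := by rw [nu, dif_neg h]
    rw [hnuy, psi, if_pos rfl, Fin.succ_last]

end Reduction

section Bijection

variable {k M : ℕ}

lemma door_up_iff (lab : Gpt (k+1) M → Fin (k+2)) (hM : 0 < M) (h1 : H1 lab) (t : Spx k M) :
    door lab (up hM t) 0 ↔ rainbow nu t := by
  have hlabel : ∀ j : Fin (k+1), lab (vert (up hM t) j.succ) = psi (nu (vert t j)) := by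
    intro j
    rw [vert_up]
    rw [h1 _ (by rw [topIdx_extendTop]; exact ⟨_, Finset.mem_insert_self _ _⟩)]
    exact nu_extendTop _
  constructor
  · intro hd v
    obtain ⟨j', hj'ne, hj'⟩ := hd (psi v) (psi_ne_zero v)
    have hj's : (j'.pred hj'ne).succ = j' := Fin.succ_pred _ _
    rw [← hj's, hlabel] at hj'
    exact ⟨j'.pred hj'ne, psi_inj hj'⟩
  · intro hr m hm
    obtain ⟨v, hv⟩ := psi_surj m hm
    obtain ⟨j, hj⟩ := hr v
    exact ⟨j.succ, Fin.succ_ne_zero _, by rw [hlabel, hj, hv]⟩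

lemma up_inj (hM : 0 < M) : Function.Injective (up (k := k) hM) := by
  intro t t' he
  have hfst := congrArg Prod.fst he
  have hsnd := congrArg Prod.snd he
  refine Prod.ext ?_ ?_
  · funext m
    have h1 := congrFun hfst m.castSucc
    have hne : (m.castSucc : Fin (k+1)) ≠ Fin.last k := (Fin.castSucc_lt_last m).ne
    rw [up_fst_ne hM t _ hne, up_fst_ne hM t' _ hne] at h1
    rwa [Fin.castPred_castSucc] at h1
  · apply Equiv.ext
    intro l
    have h1 : (up hM t).2 l.succ = (up hM t').2 l.succ := by rw [hsnd]
    rw [up_snd_succ, up_snd_succ] at h1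
    exact Fin.castSucc_injective _ h1

lemma bdry_card_eq (lab : Gpt (k+1) M → Fin (k+2)) (h0 : H0 lab) (h1 : H1 lab) (hM : 0 < M) :
    ((Finset.univ.filter
        (fun p : Spx (k+1) M × Fin (k+2) => door lab p.1 p.2 ∧ Bdry p)).card)
      = ((Finset.univ.filter (fun t : Spx k M => rainbow nu t)).card) := by
  classical
  symm
  apply Finset.card_bij (i := fun t _ => ((up hM t, 0) : Spx (k+1) M × Fin (k+2)))
  · intro t ht
    simp only [Finset.mem_filter, Finset.mem_univ, true_and] at ht ⊢
    constructor
    · exact (door_up_iff lab hM h1 t).mpr ht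
    · left
      refine ⟨rfl, ?_⟩
      show ((up hM t).1 ((up hM t).2 0) : ℕ) + 1 = M
      rw [up_snd_zero, up_fst_last]
      omega
  · intro t1 h1' t2 h2' he
    have := congrArg Prod.fst he
    exact up_inj hM this
  · rintro ⟨s, j⟩ hp
    simp only [Finset.mem_filter, Finset.mem_univ, true_and] at hp
    obtain ⟨hd, hb⟩ := hp
    rcases hb with ⟨hj, htop⟩ | ⟨hj, hz⟩
    swap
    · exfalso
      have hj' : j = Fin.last (k+1) := hj
      subst hj'
      replace hz : (s.1 (s.2 (Fin.last k)) : ℕ) = 0 := hz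
      exact no_bottom_door lab h0 s hd hz
    · have hj' : j = 0 := hj
      subst hj'
      replace htop : (s.1 (s.2 0) : ℕ) + 1 = M := htop
      have hpi : s.2 0 = Fin.last k := top_door_pi0 lab h1 s hd htop
      have hr : ∀ l : Fin k, s.2 l.succ ≠ Fin.last k := by
        intro l hc
        have : s.2 l.succ = s.2 0 := by rw [hc, hpi]
        have := s.2.injective this
        exact Fin.succ_ne_zero l this
      set r : Fin k → Fin k := fun l => (s.2 l.succ).castPred (hr l) with hrdef
      have hrinj : Function.Injective r := by
        intro a b hab
        have : s.2 a.succ = s.2 b.succ := by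
          have := congrArg Fin.castSucc hab
          rwa [hrdef, Fin.castSucc_castPred, Fin.castSucc_castPred] at this
        exact Fin.succ_injective _ (s.2.injective this)
      set t : Spx k M := (fun m => s.1 m.castSucc,
        Equiv.ofBijective r (Finite.injective_iff_bijective.mp hrinj)) with htdef
      have hup : up hM t = s := by
        refine Prod.ext ?_ ?_
        · funext i
          by_cases h : i = Fin.last k
          · subst h
            apply Fin.ext
            rw [up_fst_last]
            have : (s.1 (s.2 0) : ℕ) = (s.1 (Fin.last k) : ℕ) := by rw [hpi]
            omega
          · rw [up_fst_ne hM t _ h]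
            show s.1 ((i.castPred h).castSucc) = s.1 i
            rw [Fin.castSucc_castPred]
        · apply Equiv.ext
          intro pos
          induction pos using Fin.cases with
          | zero => rw [up_snd_zero, hpi]
          | succ l =>
            rw [up_snd_succ]
            show ((s.2 l.succ).castPred (hr l)).castSucc = s.2 l.succ
            exact Fin.castSucc_castPred _ _
      refine ⟨t, ?_, ?_⟩
      · simp only [Finset.mem_filter, Finset.mem_univ, true_and]
        apply (door_up_iff lab hM h1 t).mp
        rw [hup]
        exact hd
      · rw [hup]

lemma rainbow_parity_step (lab : Gpt (k+1) M → Fin (k+2)) (h0 : H0 lab) (h1 : H1 lab)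
    (hM : 0 < M) :
    ((Finset.univ.filter (fun s : Spx (k+1) M => rainbow lab s)).card : ZMod 2)
      = ((Finset.univ.filter (fun t : Spx k M => rainbow nu t)).card : ZMod 2) := by
  rw [← card_pairs lab, card_bdry_parity lab]
  exact_mod_cast congrArg _ (bdry_card_eq lab h0 h1 hM)

lemma H0_nu (hM : 0 < M) : H0 (nu : Gpt k M → Fin (k+1)) := by
  intro x i hx hc
  rw [nu] at hc
  split at hc
  · next h =>
    have hmin := Finset.min'_mem (topIdxSet x) h
    have heq := Fin.succ_injective _ hc
    rw [heq] at hmin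
    simp only [topIdxSet, Finset.mem_filter, Finset.mem_univ, true_and] at hmin
    omega
  · exact Fin.succ_ne_zero _ hc.symm

lemma H1_nu : H1 (nu : Gpt k M → Fin (k+1)) := fun _ _ => rfl

lemma canonical_card : ∀ (k M : ℕ), 0 < M →
    ((Finset.univ.filter (fun t : Spx k M => rainbow nu t)).card : ZMod 2) = 1
  | 0, M, hM => by
    have hall : ∀ t : Spx 0 M, rainbow nu t := by
      intro t m
      refine ⟨0, ?_⟩
      have h1 : nu (vert t 0) = 0 := by
        rw [nu, dif_neg]
        rw [Finset.not_nonempty_iff_eq_empty]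
        apply Finset.eq_empty_of_isEmpty
      rw [h1]
      apply Fin.ext
      have := m.isLt
      omega
    rw [Finset.filter_true_of_mem (fun t _ => hall t)]
    rw [Finset.card_univ]
    have : Fintype.card (Spx 0 M) = 1 := by
      rw [Fintype.card_prod, Fintype.card_perm]
      simp
    rw [this]
    rfl
  | (k+1), M, hM => by
    rw [rainbow_parity_step nu (H0_nu hM) H1_nu hM]
    exact canonical_card k M hM

theorem key_exists {k M : ℕ} (lab : Gpt (k+1) M → Fin (k+2)) (h0 : H0 lab) (h1 : H1 lab)
    (hM : 0 < M) : ∃ s : Spx (k+1) M, rainbow lab s := by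
  by_contra h
  push_neg at h
  have hcard := rainbow_parity_step lab h0 h1 hM
  rw [canonical_card k M hM] at hcard
  rw [Finset.filter_false_of_mem (fun s _ => h s)] at hcard
  simp at hcard

end Bijection

section PM

variable {k N : ℕ}

lemma vert_cell (s : Spx k M) (j j' : Fin (k+1)) (i : Fin k) :
    (vert s j i : ℕ) ≤ (vert s j' i : ℕ) + 1 ∧ (vert s j' i : ℕ) ≤ (vert s j i : ℕ) + 1 := by
  rw [vert_val, vert_val]
  constructor <;> [skip; skip] <;> (split <;> split <;> omega)

/-- truncation of an extended grid point with no coordinate equal to N+1 -/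
def trunc (x : Gpt (k+1) (N+1)) (h : ¬ (topIdxSet x).Nonempty) : Gpt (k+1) N :=
  fun i => ⟨(x i : ℕ), by
    have h1 : (x i : ℕ) ≠ N + 1 := by
      intro hc
      exact h ⟨i, by simp [topIdxSet, hc]⟩
    have := (x i).isLt
    omega⟩

theorem pm_disc (g : Gpt (k+1) N → (Fin (k+1)) × Bool)
    (hbot : ∀ x (i : Fin (k+1)), (x i : ℕ) = 0 → g x ≠ (i, false))
    (htop : ∀ x (i : Fin (k+1)), (x i : ℕ) = N → g x ≠ (i, true)) :
    ∃ (i : Fin (k+1)) (x y : Gpt (k+1) N),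
      (∀ j, (x j : ℕ) ≤ (y j : ℕ) + 1 ∧ (y j : ℕ) ≤ (x j : ℕ) + 1) ∧
      g x = (i, true) ∧ g y = (i, false) := by
  classical
  set lab : Gpt (k+1) (N+1) → Fin (k+2) := fun x =>
    if h : (topIdxSet x).Nonempty then nu x
    else (if (g (trunc x h)).2 then 0 else (g (trunc x h)).1.succ) with hlab
  have h1 : H1 lab := by
    intro x h
    rw [hlab]
    simp only [dif_pos h]
  have h0 : H0 lab := by
    intro x i hx hc
    rw [hlab] at hc
    simp only at hc
    split at hc
    · next h =>
      rw [nu, dif_pos h] at hc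
      have hmin := Finset.min'_mem (topIdxSet x) h
      rw [Fin.succ_injective _ hc] at hmin
      simp only [topIdxSet, Finset.mem_filter, Finset.mem_univ, true_and] at hmin
      omega
    · next h =>
      split at hc
      · exact Fin.succ_ne_zero _ hc.symm
      · next hb =>
        have hi : (g (trunc x h)).1 = i := Fin.succ_injective _ hc
        have hval : ((trunc x h) i : ℕ) = 0 := hx
        apply hbot (trunc x h) i hval
        rw [Prod.ext_iff, hi]
        exact ⟨rfl, by simpa using hb⟩
  obtain ⟨s, hs⟩ := key_exists lab h0 h1 (Nat.succ_pos N)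
  obtain ⟨j₀, hj₀⟩ := hs 0
  have hx : ¬ (topIdxSet (vert s j₀)).Nonempty := by
    intro h
    rw [hlab] at hj₀
    simp only [dif_pos h] at hj₀
    rw [nu, dif_pos h] at hj₀
    exact Fin.succ_ne_zero _ hj₀
  have hgx : (g (trunc (vert s j₀) hx)).2 = true := by
    rw [hlab] at hj₀
    simp only [dif_neg hx] at hj₀
    by_contra hb
    rw [if_neg hb] at hj₀
    exact Fin.succ_ne_zero _ hj₀
  set i := (g (trunc (vert s j₀) hx)).1 with hidef
  have hgx' : g (trunc (vert s j₀) hx) = (i, true) := by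
    rw [Prod.ext_iff]
    exact ⟨rfl, hgx⟩
  obtain ⟨j₁, hj₁⟩ := hs i.succ
  by_cases hy : (topIdxSet (vert s j₁)).Nonempty
  · exfalso
    rw [hlab] at hj₁
    simp only [dif_pos hy] at hj₁
    rw [nu, dif_pos hy] at hj₁
    have hmin := Finset.min'_mem (topIdxSet (vert s j₁)) hy
    rw [Fin.succ_injective _ hj₁] at hmin
    simp only [topIdxSet, Finset.mem_filter, Finset.mem_univ, true_and] at hmin
    -- vert s j₁ i = N+1, so vert s j₀ i ≥ N; but also ≤ N
    have hcell := vert_cell s j₀ j₁ i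
    have hle : ((vert s j₀ i : ℕ)) ≠ N + 1 := by
      intro hc
      exact hx ⟨i, by simp [topIdxSet, hc]⟩
    have hlt := (vert s j₀ i).isLt
    have hvalN : ((trunc (vert s j₀) hx) i : ℕ) = N := by
      show ((vert s j₀ i : ℕ)) = N
      omega
    exact htop (trunc (vert s j₀) hx) i hvalN hgx'
  · rw [hlab] at hj₁
    simp only [dif_neg hy] at hj₁
    have hgy2 : (g (trunc (vert s j₁) hy)).2 = false := by
      by_contra hb
      rw [if_pos (by simpa using hb)] at hj₁
      exact (Fin.succ_ne_zero i hj₁.symm)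
    rw [if_neg (by rw [hgy2]; exact Bool.false_ne_true)] at hj₁
    have hgy1 : (g (trunc (vert s j₁) hy)).1 = i := Fin.succ_injective _ hj₁
    refine ⟨i, trunc (vert s j₀) hx, trunc (vert s j₁) hy, ?_, hgx', ?_⟩
    · intro j
      exact vert_cell s j₀ j₁ j
    · rw [Prod.ext_iff, hgy1, hgy2]
      exact ⟨rfl, rfl⟩

/-- the relation of being adjacent and both of colour `i` -/
def adjRel {d N : ℕ} (χ : Gpt d N → Fin d) (i : Fin d) (a b : Gpt d N) : Prop :=
  (∀ j, (a j : ℕ) ≤ (b j : ℕ) + 1 ∧ (b j : ℕ) ≤ (a j : ℕ) + 1) ∧ χ a = i ∧ χ b = i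

theorem spanning (χ : Gpt (k+1) N → Fin (k+1)) :
    ∃ (i : Fin (k+1)) (x y : Gpt (k+1) N), χ x = i ∧
      Relation.ReflTransGen (adjRel χ i) x y ∧ (x i : ℕ) = 0 ∧ (y i : ℕ) = N := by
  by_contra hcon
  push_neg at hcon
  classical
  set W : Gpt (k+1) N → Prop := fun x =>
    ∃ y, Relation.ReflTransGen (adjRel χ (χ x)) x y ∧ (y (χ x) : ℕ) = N with hW
  set g : Gpt (k+1) N → Fin (k+1) × Bool := fun x => (χ x, if W x then false else true) with hg
  have hbot : ∀ x (i : Fin (k+1)), (x i : ℕ) = 0 → g x ≠ (i, false) := by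
    intro x i hx hc
    rw [hg] at hc
    simp only [Prod.mk.injEq] at hc
    obtain ⟨hχ, hw⟩ := hc
    have hWx : W x := by
      by_contra hb
      rw [if_neg hb] at hw
      exact absurd hw (by simp)
    obtain ⟨y, hchain, hyN⟩ := hWx
    rw [hχ] at hchain hyN
    exact hcon i x y hχ hchain hx hyN
  have htop : ∀ x (i : Fin (k+1)), (x i : ℕ) = N → g x ≠ (i, true) := by
    intro x i hx hc
    rw [hg] at hc
    simp only [Prod.mk.injEq] at hc
    obtain ⟨hχ, hw⟩ := hc
    have hWx : W x := ⟨x, Relation.ReflTransGen.refl, by rw [hχ]; exact hx⟩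
    rw [if_pos hWx] at hw
    exact absurd hw (by simp)
  obtain ⟨i, x, y, hadj, hgx, hgy⟩ := pm_disc g hbot htop
  have hχx : χ x = i := by
    have := congrArg Prod.fst hgx
    simpa [hg] using this
  have hχy : χ y = i := by
    have := congrArg Prod.fst hgy
    simpa [hg] using this
  have hWx : ¬ W x := by
    intro hw
    have := congrArg Prod.snd hgx
    simp only [hg, if_pos hw] at this
    exact absurd this (by simp)
  have hWy : W y := by
    by_contra hw
    have := congrArg Prod.snd hgy
    simp only [hg, if_neg hw] at this
    exact absurd this (by simp)
  apply hWx
  obtain ⟨z, hchain, hzN⟩ := hWy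
  rw [hχy] at hchain hzN
  refine ⟨z, ?_, ?_⟩
  · rw [hχx]
    exact Relation.ReflTransGen.head ⟨hadj, hχx, hχy⟩ hchain
  · rw [hχx]
    exact hzN

end PM

section Glue

lemma dist_le_of_coords {d : ℕ} (u v : EuclideanSpace ℝ (Fin d)) (t : ℝ) (ht : 0 ≤ t)
    (h : ∀ i, |u i - v i| ≤ t) : dist u v ≤ (d : ℝ) * t := by
  rw [EuclideanSpace.dist_eq]
  have h1 : ∀ i, dist (u i) (v i) ^ 2 ≤ t ^ 2 := by
    intro i
    rw [Real.dist_eq]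
    have := h i
    nlinarith [abs_nonneg (u i - v i)]
  have h2 : (∑ i, dist (u i) (v i) ^ 2) ≤ (d : ℝ) * t ^ 2 := by
    calc (∑ i, dist (u i) (v i) ^ 2) ≤ ∑ _i : Fin d, t ^ 2 :=
          Finset.sum_le_sum (fun i _ => h1 i)
      _ = (d : ℝ) * t ^ 2 := by
          rw [Finset.sum_const, Finset.card_univ, Fintype.card_fin, nsmul_eq_mul]
  have hdd : (d : ℝ) ≤ (d : ℝ) * (d : ℝ) := by
    have : (d : ℕ) ≤ d * d := by
      rcases Nat.eq_zero_or_pos d with h0 | h0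
      · simp [h0]
      · exact Nat.le_mul_of_pos_left _ h0
    exact_mod_cast this
  calc Real.sqrt (∑ i, dist (u i) (v i) ^ 2) ≤ Real.sqrt (((d:ℝ) * t) ^ 2) := by
        apply Real.sqrt_le_sqrt
        nlinarith [sq_nonneg t, Nat.cast_nonneg (α := ℝ) d]
    _ = (d : ℝ) * t := Real.sqrt_sq (by positivity)

lemma coord_le_dist {d : ℕ} (u v : EuclideanSpace ℝ (Fin d)) (i : Fin d) :
    |u i - v i| ≤ dist u v := by
  rw [EuclideanSpace.dist_eq]
  calc |u i - v i| = dist (u i) (v i) := (Real.dist_eq _ _).symm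
    _ = Real.sqrt (dist (u i) (v i) ^ 2) := (Real.sqrt_sq dist_nonneg).symm
    _ ≤ Real.sqrt (∑ j, dist (u j) (v j) ^ 2) := by
        apply Real.sqrt_le_sqrt
        exact Finset.single_le_sum (f := fun j => dist (u j) (v j) ^ 2)
          (fun j _ => sq_nonneg _) (Finset.mem_univ i)

lemma nat_adj_abs (m n : ℕ) (h1 : m ≤ n + 1) (h2 : n ≤ m + 1) : |(m : ℝ) - n| ≤ 1 := by
  rw [abs_le]
  have c1 : (m : ℝ) ≤ (n : ℝ) + 1 := by exact_mod_cast h1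
  have c2 : (n : ℝ) ≤ (m : ℝ) + 1 := by exact_mod_cast h2
  constructor <;> linarith

end Glue

end Por

open Set
open scoped ENNReal

/-- `Θ` has Nagata dimension at most `n` with constant `c`: for every `s > 0` there is an
`s`-cover of `Θ` consisting of `n+1` collections `𝒰₀, …, 𝒰ₙ`, each of which is
`cs`-separated. -/
def NagataDimLE {d : ℕ} (Θ : Set (EuclideanSpace ℝ (Fin d))) (n : ℕ) (c : ℝ) : Prop :=
  ∀ s : ℝ, 0 < s →
    ∃ 𝒰 : Fin (n + 1) → Set (Set (EuclideanSpace ℝ (Fin d))),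
      (Θ ⊆ ⋃ i, ⋃₀ 𝒰 i) ∧
      (∀ i, ∀ U ∈ 𝒰 i, EMetric.diam U ≤ ENNReal.ofReal s) ∧
      (∀ i, ∀ U ∈ 𝒰 i, ∀ V ∈ 𝒰 i, U ≠ V → ∀ p ∈ U, ∀ q ∈ V, c * s ≤ dist p q)

/-- `Θ` is `q`-porous: every point of `Θ` is a `q`-porosity point, i.e. for every `r > 0`
there is a ball of radius `qr` contained in `B_r(x) \ Θ`. -/
def QPorous {d : ℕ} (q : ℝ) (Θ : Set (EuclideanSpace ℝ (Fin d))) : Prop :=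
  ∀ x ∈ Θ, ∀ r : ℝ, 0 < r →
    ∃ y : EuclideanSpace ℝ (Fin d), Metric.ball y (q * r) ⊆ Metric.ball x r \ Θ

set_option maxHeartbeats 2000000 in
/-- For every `d ≥ 1` and `c > 0` there is a `q > 0` such that every `Θ ⊆ ℝ^d` of Nagata
dimension at most `d - 1` with constant `c` is `q`-porous. -/
theorem exists_porosity_const_of_nagataDim_le {d : ℕ} (hd : 1 ≤ d) (c : ℝ) (hc : 0 < c) :
    ∃ q : ℝ, 0 < q ∧
      ∀ Θ : Set (EuclideanSpace ℝ (Fin d)), NagataDimLE Θ (d - 1) c → QPorous q Θ := by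
  obtain ⟨k, rfl⟩ : ∃ k, d = k + 1 := ⟨d - 1, (Nat.succ_pred_eq_of_pos hd).symm⟩
  set D : ℝ := ((k+1 : ℕ) : ℝ) with hD
  have hD1 : (1:ℝ) ≤ D := by
    rw [hD]; exact_mod_cast Nat.one_le_iff_ne_zero.mpr (Nat.succ_ne_zero k)
  have hD0 : (0:ℝ) < D := lt_of_lt_of_le one_pos hD1
  refine ⟨min (1/(8*D)) (c/(32*D)), lt_min (by positivity) (by positivity), ?_⟩
  intro Θ hΘ x hx r hr
  by_contra hcon
  push_neg at hcon
  set q : ℝ := min (1/(8*D)) (c/(32*D)) with hq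
  have hq0 : 0 < q := lt_min (by positivity) (by positivity)
  have hq8 : q ≤ 1/(8*D) := min_le_left _ _
  have hqc : q ≤ c/(32*D) := min_le_right _ _
  have hq8' : q*(8*D) ≤ 1 := by
    rw [← le_div_iff₀ (by positivity)]; exact hq8
  have hqc' : q*(32*D) ≤ c := by
    rw [← le_div_iff₀ (by positivity)]; exact hqc
  have hq1 : q ≤ 1/8 := by
    refine hq8.trans ?_
    rw [div_le_div_iff₀ (by positivity) (by norm_num)]
    nlinarith
  have hdense : ∀ w : EuclideanSpace ℝ (Fin (k+1)), dist w x ≤ (1 - q)*r →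
      ∃ θ ∈ Θ, dist θ w < q*r := by
    intro w hw
    have hsub : Metric.ball w (q*r) ⊆ Metric.ball x r := by
      intro z hz
      rw [Metric.mem_ball] at hz ⊢
      have := dist_triangle z w x
      nlinarith
    obtain ⟨z, hz1, hz2⟩ := Set.not_subset.mp (hcon w)
    refine ⟨z, ?_, ?_⟩
    · by_contra hzΘ
      exact hz2 ⟨hsub hz1, hzΘ⟩
    · rw [Metric.mem_ball] at hz1; exact hz1
  set a : ℝ := (1 - q)*r/D with ha
  have ha0 : 0 < a := by
    apply div_pos _ hD0
    nlinarith
  have haD : a*D = (1-q)*r := by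
    rw [ha]; field_simp
  obtain ⟨𝒰, hcover, hdiam, hsep⟩ := hΘ a ha0
  set N : ℕ := max 1 (Nat.ceil (4*D/c)) with hN
  have hN1 : 1 ≤ N := le_max_left _ _
  have hN0 : (0:ℝ) < (N:ℝ) := by exact_mod_cast hN1
  have hNc : 4*D ≤ c*N := by
    have h1 : (4*D/c) ≤ (Nat.ceil (4*D/c) : ℝ) := Nat.le_ceil _
    have h2 : ((Nat.ceil (4*D/c) : ℕ) : ℝ) ≤ (N:ℝ) := by
      exact_mod_cast le_max_right 1 (Nat.ceil (4*D/c))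
    rw [div_le_iff₀ hc] at h1
    nlinarith
  set h : ℝ := 2*a/N with hh
  have hh0 : 0 < h := by positivity
  have hNne : (N:ℝ) ≠ 0 := ne_of_gt hN0
  have hhN : h*(N:ℝ) = 2*a := by
    rw [hh]; field_simp
  set P : Por.Gpt (k+1) N → EuclideanSpace ℝ (Fin (k+1)) :=
    fun y => WithLp.toLp 2 (fun i => x i - a + h*((y i : ℕ) : ℝ)) with hP
  have hPdef : ∀ (y : Por.Gpt (k+1) N) (i : Fin (k+1)),
      P y i = x i - a + h*((y i : ℕ) : ℝ) := fun y i => rfl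
  have hPx : ∀ y, dist (P y) x ≤ (1 - q)*r := by
    intro y
    have hco : ∀ i, |P y i - x i| ≤ a := by
      intro i
      rw [hPdef]
      have h1 : (0:ℝ) ≤ h*((y i : ℕ) : ℝ) := by positivity
      have h2 : h*((y i : ℕ) : ℝ) ≤ 2*a := by
        have hy : ((y i : ℕ) : ℝ) ≤ (N:ℝ) := by exact_mod_cast Fin.is_le (y i)
        calc h*((y i : ℕ) : ℝ) ≤ h*(N:ℝ) := by nlinarith
          _ = 2*a := hhN
      rw [abs_le]; constructor <;> nlinarith
    calc dist (P y) x ≤ D * a := by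
          have := Por.dist_le_of_coords (P y) x a (le_of_lt ha0) hco
          rw [hD]; exact this
      _ = (1-q)*r := by rw [mul_comm]; exact haD
  have hθ : ∀ y : Por.Gpt (k+1) N, ∃ θ ∈ Θ, dist θ (P y) < q*r :=
    fun y => hdense (P y) (hPx y)
  choose θ hθΘ hθd using hθ
  have hUc : ∀ y : Por.Gpt (k+1) N,
      ∃ (i : Fin (k+1)) (U : Set (EuclideanSpace ℝ (Fin (k+1)))), U ∈ 𝒰 i ∧ θ y ∈ U := by
    intro y
    have hm := hcover (hθΘ y)
    rw [Set.mem_iUnion] at hm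
    obtain ⟨i, hi⟩ := hm
    rw [Set.mem_sUnion] at hi
    obtain ⟨U, hU, hmem⟩ := hi
    exact ⟨i, U, hU, hmem⟩
  choose χ U hU hmem using hUc
  obtain ⟨i₀, x₀, y₀, hχx₀, hchain, hx₀0, hy₀N⟩ := Por.spanning χ
  have hadj_dist : ∀ aa bb : Por.Gpt (k+1) N,
      (∀ j, ((aa j : ℕ)) ≤ (bb j : ℕ) + 1 ∧ ((bb j : ℕ)) ≤ (aa j : ℕ) + 1) →
      dist (P aa) (P bb) ≤ D * h := by
    intro aa bb hj
    rw [hD]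
    apply Por.dist_le_of_coords _ _ h (le_of_lt hh0)
    intro i
    rw [hPdef, hPdef]
    have heq : (x i - a + h*((aa i : ℕ):ℝ)) - (x i - a + h*((bb i : ℕ):ℝ))
        = h * (((aa i : ℕ):ℝ) - ((bb i : ℕ):ℝ)) := by ring
    rw [heq, abs_mul, abs_of_pos hh0]
    have habs := Por.nat_adj_abs (aa i) (bb i) (hj i).1 (hj i).2
    nlinarith
  have hDh : D*h ≤ c*a/2 := by
    have he : D*h = 2*D*a/(N:ℝ) := by rw [hh]; ring
    rw [he, div_le_iff₀ hN0]
    nlinarith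
  have h2qr : 2*(q*r) < c*a/2 := by
    nlinarith [mul_pos (mul_pos hq0 hD0) hr, mul_pos hq0 hr]
  have hstep : ∀ aa bb : Por.Gpt (k+1) N, Por.adjRel χ i₀ aa bb → U aa = U bb := by
    intro aa bb hab
    by_contra hne
    have hUa : U aa ∈ 𝒰 i₀ := by rw [← hab.2.1]; exact hU aa
    have hUb : U bb ∈ 𝒰 i₀ := by rw [← hab.2.2]; exact hU bb
    have hsep' := hsep i₀ (U aa) hUa (U bb) hUb hne (θ aa) (hmem aa) (θ bb) (hmem bb)
    have hd1 := hθd aa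
    have hd2 := hθd bb
    have hd3 := hadj_dist aa bb hab.1
    have htri := dist_triangle4 (θ aa) (P aa) (P bb) (θ bb)
    have hc1 : dist (θ aa) (P aa) < q*r := hd1
    have hc2 : dist (P bb) (θ bb) < q*r := by rw [dist_comm]; exact hd2
    linarith
  have hUchain : U x₀ = U y₀ := by
    clear hx₀0 hy₀N hχx₀
    induction hchain with
    | refl => rfl
    | tail h1 h2 ih => exact ih.trans (hstep _ _ h2)
  have hdU := hdiam (χ x₀) (U x₀) (hU x₀)
  have hmy : θ y₀ ∈ U x₀ := by rw [hUchain]; exact hmem y₀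
  have hedist : edist (θ x₀) (θ y₀) ≤ EMetric.diam (U x₀) :=
    EMetric.edist_le_diam_of_mem (hmem x₀) hmy
  have hdistU : dist (θ x₀) (θ y₀) ≤ a := by
    have h1 : ENNReal.ofReal (dist (θ x₀) (θ y₀)) ≤ ENNReal.ofReal a := by
      rw [← edist_dist]
      exact le_trans hedist hdU
    exact (ENNReal.ofReal_le_ofReal_iff (le_of_lt ha0)).mp h1
  have hc1 : ((x₀ i₀ : ℕ):ℝ) = 0 := by exact_mod_cast hx₀0
  have hc2 : ((y₀ i₀ : ℕ):ℝ) = (N:ℝ) := by exact_mod_cast hy₀N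
  have hlow : 2*a ≤ dist (P x₀) (P y₀) := by
    have hcd := Por.coord_le_dist (P x₀) (P y₀) i₀
    have heq : P x₀ i₀ - P y₀ i₀ = -(h*(N:ℝ)) := by
      rw [hPdef, hPdef, hc1, hc2]; ring
    rw [heq, abs_neg, abs_of_pos (by positivity), hhN] at hcd
    exact hcd
  have htri := dist_triangle4 (P x₀) (θ x₀) (θ y₀) (P y₀)
  have he1 : dist (P x₀) (θ x₀) < q*r := by rw [dist_comm]; exact hθd x₀
  have he2 : dist (θ y₀) (P y₀) < q*r := hθd y₀
  -- from the chain: a ≤ 2*q*r ; but also 2*q*r < a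
  have hfin : a ≤ 2*(q*r) := by linarith
  have hfin2 : 2*(q*r) < a := by
    nlinarith [mul_pos hq0 hr, mul_pos (mul_pos hq0 hr) hD0]
  linarith
end

section
/- Let ℱ = {f₁, …, f_m} be a self-similar iterated function system on ℝ^d with attractor K. Then ℱ has finite types of neighborhoods (i.e., N_ε(ℱ) is finite for some ε > 0) if and only if ℱ satisfies the finite type condition (i.e., N₀(ℱ) is finite). -/
open Set
open scoped ENNReal

/-- The composition `f_𝐢 = f_{i₁} ∘ ⋯ ∘ f_{i_k}` associated with a finite word
`𝐢 = i₁⋯i_k` (the empty word gives the identity). -/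
def wordMap {d m : ℕ} (f : Fin m → EuclideanSpace ℝ (Fin d) → EuclideanSpace ℝ (Fin d)) :
    List (Fin m) → EuclideanSpace ℝ (Fin d) → EuclideanSpace ℝ (Fin d) :=
  fun l => l.foldr (fun i g => f i ∘ g) id

/-- The set `N_ε(ℱ)` of neighbor maps `h = f_𝐢⁻¹ ∘ f_𝐣 ≠ id` (encoded by
`f_𝐢 ∘ h = f_𝐣`) whose similarity ratio lies in `[r_min, r_min⁻¹]` and for which
`[K]_ε ∩ h([K]_ε) ≠ ∅`, where `[K]_ε` is the closed `ε`-neighborhood of `K`. -/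
def NeighborSet {d m : ℕ} (f : Fin m → EuclideanSpace ℝ (Fin d) → EuclideanSpace ℝ (Fin d))
    (rmin : ℝ) (K : Set (EuclideanSpace ℝ (Fin d))) (ε : ℝ) :
    Set (EuclideanSpace ℝ (Fin d) → EuclideanSpace ℝ (Fin d)) :=
  {h | (∃ I J : List (Fin m), wordMap f I ∘ h = wordMap f J) ∧ h ≠ id ∧
       (∃ ρ : ℝ, rmin ≤ ρ ∧ ρ ≤ rmin⁻¹ ∧ ∀ x y, dist (h x) (h y) = ρ * dist x y) ∧
       (Metric.cthickening ε K ∩ h '' Metric.cthickening ε K).Nonempty}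

/-- A map multiplying all distances by `ρ > 0` on a Euclidean space is bijective. -/
lemma sim_bijective {d : ℕ} (g : EuclideanSpace ℝ (Fin d) → EuclideanSpace ℝ (Fin d))
    (ρ : ℝ) (hρ : 0 < ρ) (hg : ∀ x y, dist (g x) (g y) = ρ * dist x y) :
    Function.Bijective g := by
  have hinj : Function.Injective g := by
    intro x y hxy
    have h1 := hg x y
    rw [hxy, dist_self] at h1
    have : dist x y = 0 := by nlinarith [dist_nonneg (x := x) (y := y)]
    exact dist_eq_zero.mp this
  set h : EuclideanSpace ℝ (Fin d) → EuclideanSpace ℝ (Fin d) :=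
    fun x => ρ⁻¹ • (g x - g 0) with hh
  have hρ' : ρ⁻¹ > 0 := inv_pos.mpr hρ
  have hdist : ∀ x y, ‖h x - h y‖ = ‖x - y‖ := by
    intro x y
    have e1 : h x - h y = ρ⁻¹ • (g x - g y) := by
      rw [hh]; simp only [← smul_sub]; congr 1; abel
    have e2 : ‖g x - g y‖ = ρ * ‖x - y‖ := by
      rw [← dist_eq_norm, ← dist_eq_norm]; exact hg x y
    rw [e1, norm_smul, e2]
    rw [Real.norm_eq_abs, abs_of_pos hρ']
    field_simp
  have hnorm : ∀ x, ‖h x‖ = ‖x‖ := by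
    intro x
    have h0 : h 0 = 0 := by rw [hh]; simp
    have := hdist x 0
    rwa [h0, sub_zero, sub_zero] at this
  have hinner : ∀ x y, (inner ℝ (h x) (h y) : ℝ) = (inner ℝ x y : ℝ) := by
    intro x y
    rw [real_inner_eq_norm_mul_self_add_norm_mul_self_sub_norm_sub_mul_self_div_two,
        real_inner_eq_norm_mul_self_add_norm_mul_self_sub_norm_sub_mul_self_div_two]
    rw [hnorm, hnorm, hdist]
  have hadd : ∀ x y, h (x + y) = h x + h y := by
    intro x y
    have e : (inner ℝ (h (x+y) - h x - h y) (h (x+y) - h x - h y) : ℝ) = 0 := by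
      simp only [inner_sub_left, inner_sub_right, hinner, inner_add_left, inner_add_right]
      ring
    have := inner_self_eq_zero.mp e
    rw [sub_sub, sub_eq_zero] at this
    exact this
  have hsmul : ∀ (c : ℝ) x, h (c • x) = c • h x := by
    intro c x
    have e : (inner ℝ (h (c • x) - c • h x) (h (c • x) - c • h x) : ℝ) = 0 := by
      simp only [inner_sub_left, inner_sub_right, real_inner_smul_left, real_inner_smul_right,
        hinner]
      ring
    have := inner_self_eq_zero.mp e
    rwa [sub_eq_zero] at this
  set L : EuclideanSpace ℝ (Fin d) →ₗ[ℝ] EuclideanSpace ℝ (Fin d) :=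
    { toFun := h, map_add' := hadd, map_smul' := hsmul } with hL
  have hLinj : Function.Injective L := by
    intro x y hxy
    have : ‖h x - h y‖ = 0 := by
      show ‖L x - L y‖ = 0
      rw [hxy]; simp
    rw [hdist, norm_eq_zero, sub_eq_zero] at this
    exact this
  have hLsurj : Function.Surjective L := LinearMap.injective_iff_surjective.mp hLinj
  refine ⟨hinj, fun z => ?_⟩
  obtain ⟨x, hx⟩ := hLsurj (ρ⁻¹ • (z - g 0))
  refine ⟨x, ?_⟩
  have hx' : h x = ρ⁻¹ • (z - g 0) := hx
  have : ρ⁻¹ • (g x - g 0) = ρ⁻¹ • (z - g 0) := hx'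
  have h2 : g x - g 0 = z - g 0 := smul_right_injective _ (ne_of_gt hρ') this
  have := sub_left_injective h2
  exact this

lemma wordMap_append {d m : ℕ} (f : Fin m → EuclideanSpace ℝ (Fin d) → EuclideanSpace ℝ (Fin d))
    (I J : List (Fin m)) : wordMap f (I ++ J) = wordMap f I ∘ wordMap f J := by
  induction I with
  | nil => rfl
  | cons i I ih =>
    show (fun x => f i (wordMap f (I ++ J) x)) = _
    rw [ih]; rfl

lemma wordMap_dist {d m : ℕ} {f : Fin m → EuclideanSpace ℝ (Fin d) → EuclideanSpace ℝ (Fin d)}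
    {r : Fin m → ℝ} (hsim : ∀ i, ∀ x y, dist (f i x) (f i y) = r i * dist x y)
    (I : List (Fin m)) (x y : EuclideanSpace ℝ (Fin d)) :
    dist (wordMap f I x) (wordMap f I y) = (I.map r).prod * dist x y := by
  induction I with
  | nil => simp [wordMap]
  | cons i I ih =>
    show dist (f i (wordMap f I x)) (f i (wordMap f I y)) = _
    rw [hsim, ih, List.map_cons, List.prod_cons]; ring

lemma wordMap_prod_pos {m : ℕ} {r : Fin m → ℝ} (hr : ∀ i, 0 < r i) (I : List (Fin m)) :
    0 < (I.map r).prod := by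
  apply List.prod_pos
  intro a ha
  obtain ⟨i, _, rfl⟩ := List.mem_map.mp ha
  exact hr i

lemma wordMap_mem {d m : ℕ} {f : Fin m → EuclideanSpace ℝ (Fin d) → EuclideanSpace ℝ (Fin d)}
    {K : Set (EuclideanSpace ℝ (Fin d))} (hfK : ∀ i, ∀ x ∈ K, f i x ∈ K)
    (I : List (Fin m)) {x : EuclideanSpace ℝ (Fin d)} (hx : x ∈ K) : wordMap f I x ∈ K := by
  induction I with
  | nil => exact hx
  | cons i I ih => exact hfK i _ ih

lemma finite_uniform {α : Type*} (S : Set α) (hS : S.Finite) (P : α → ℝ → Prop)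
    (hmono : ∀ c s t, s ≤ t → P c t → P c s)
    (h : ∀ c ∈ S, ∃ t, 0 < t ∧ P c t) : ∃ τ, 0 < τ ∧ ∀ c ∈ S, P c τ := by
  refine Set.Finite.induction_on S
    (motive := fun s _ => (∀ c ∈ s, ∃ t, 0 < t ∧ P c t) → ∃ τ, 0 < τ ∧ ∀ c ∈ s, P c τ) hS
    (fun _ => ⟨1, one_pos, fun c hc => absurd hc (Set.notMem_empty c)⟩) ?_ h
  intro a s _ _ ih h'
  obtain ⟨τ₁, hτ₁, hP₁⟩ := ih fun c hc => h' c (Set.mem_insert_of_mem a hc)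
  obtain ⟨τ₂, hτ₂, hP₂⟩ := h' a (Set.mem_insert a s)
  refine ⟨min τ₁ τ₂, lt_min hτ₁ hτ₂, fun c hc => ?_⟩
  rcases hc with rfl | hc
  · exact hmono c _ _ (min_le_right _ _) hP₂
  · exact hmono c _ _ (min_le_left _ _) (hP₁ c hc)

/-- The finite set of candidate "first separated" neighbor maps. -/
def candSet {d m : ℕ} (f : Fin m → EuclideanSpace ℝ (Fin d) → EuclideanSpace ℝ (Fin d))
    (rmin : ℝ) (K : Set (EuclideanSpace ℝ (Fin d))) :
    Set (EuclideanSpace ℝ (Fin d) → EuclideanSpace ℝ (Fin d)) :=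
  (⋃ a : Fin m, (fun p => Function.invFun (f a) ∘ p) '' insert id (NeighborSet f rmin K 0)) ∪
  (⋃ b : Fin m, (fun p => p ∘ f b) '' insert id (NeighborSet f rmin K 0))

lemma candSet_finite {d m : ℕ} {f : Fin m → EuclideanSpace ℝ (Fin d) → EuclideanSpace ℝ (Fin d)}
    {rmin : ℝ} {K : Set (EuclideanSpace ℝ (Fin d))}
    (h : (NeighborSet f rmin K 0).Finite) : (candSet f rmin K).Finite :=
  Set.Finite.union (Set.finite_iUnion fun _ => (h.insert id).image _)
    (Set.finite_iUnion fun _ => (h.insert id).image _)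

set_option maxHeartbeats 2000000 in
/-- A self-similar IFS on `ℝ^d` has finite types of neighborhoods (`N_ε(ℱ)` finite for some
`ε > 0`) if and only if it satisfies the finite type condition (`N₀(ℱ)` finite). -/
theorem finite_types_of_neighborhoods_iff_finite_type {d m : ℕ}
    (f : Fin m → EuclideanSpace ℝ (Fin d) → EuclideanSpace ℝ (Fin d))
    (r : Fin m → ℝ) (hr : ∀ i, 0 < r i ∧ r i < 1)
    (hsim : ∀ i, ∀ x y, dist (f i x) (f i y) = r i * dist x y)
    (K : Set (EuclideanSpace ℝ (Fin d))) (hKne : K.Nonempty) (hKc : IsCompact K)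
    (hKattr : K = ⋃ i, f i '' K)
    (rmin : ℝ) (hrmin : IsLeast (Set.range r) rmin) :
    (∃ ε : ℝ, 0 < ε ∧ (NeighborSet f rmin K ε).Finite) ↔
      (NeighborSet f rmin K 0).Finite := by
  classical
  constructor
  · rintro ⟨ε, hε, hfin⟩
    refine hfin.subset ?_
    rintro g ⟨hw, hid, hρ, z, hz1, u, hu, hzu⟩
    have hmono := Metric.cthickening_mono (le_of_lt hε) (E := K)
    exact ⟨hw, hid, hρ, z, hmono hz1, u, hmono hu, hzu⟩
  · intro hfin0
    -- Basic facts
    obtain ⟨i0, hi0⟩ := hrmin.1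
    have hrmin0 : 0 < rmin := hi0 ▸ (hr i0).1
    have hrminle : ∀ i, rmin ≤ r i := fun i => hrmin.2 ⟨i, rfl⟩
    have hrpos : ∀ i, 0 < r i := fun i => (hr i).1
    have hrle1 : ∀ i, r i ≤ 1 := fun i => (hr i).2.le
    have hfK : ∀ i, ∀ x ∈ K, f i x ∈ K := by
      intro i x hx
      rw [hKattr]
      exact mem_iUnion.mpr ⟨i, mem_image_of_mem _ hx⟩
    have hK0 : Metric.cthickening 0 K = K := by
      rw [Metric.cthickening_zero, hKc.isClosed.closure_eq]
    have hbij : ∀ i, Function.Bijective (f i) :=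
      fun i => sim_bijective (f i) (r i) (hrpos i) (hsim i)
    have hsymm : ∀ i x, Function.invFun (f i) (f i x) = x :=
      fun i x => Function.leftInverse_invFun (hbij i).1 x
    have happ : ∀ i y, f i (Function.invFun (f i) y) = y :=
      fun i y => Function.rightInverse_invFun (hbij i).2 y
    -- membership in the touching candidate set
    have mkmem : ∀ (I J : List (Fin m)) (p : EuclideanSpace ℝ (Fin d) → EuclideanSpace ℝ (Fin d)),
        wordMap f I ∘ p = wordMap f J →
        rmin * (I.map r).prod ≤ (J.map r).prod →
        rmin * (J.map r).prod ≤ (I.map r).prod →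
        (∃ x ∈ K, ∃ y ∈ K, x = p y) →
        p ∈ insert id (NeighborSet f rmin K 0) := by
      intro I J p heq h1 h2 htp
      by_cases hpid : p = id
      · exact hpid ▸ mem_insert _ _
      refine mem_insert_of_mem _ ?_
      have hpIpos := wordMap_prod_pos hrpos I
      have hpJpos := wordMap_prod_pos hrpos J
      have hdp : ∀ x y, dist (p x) (p y) = ((J.map r).prod / (I.map r).prod) * dist x y := by
        intro x y
        have e1 := congrFun heq x
        have e2 := congrFun heq y
        simp only [Function.comp_apply] at e1 e2
        have h3 : dist (wordMap f I (p x)) (wordMap f I (p y))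
            = dist (wordMap f J x) (wordMap f J y) := by rw [e1, e2]
        rw [wordMap_dist hsim, wordMap_dist hsim] at h3
        field_simp
        linear_combination h3
      obtain ⟨x, hx, y, hy, hxy⟩ := htp
      refine ⟨⟨I, J, heq⟩, hpid, ⟨(J.map r).prod / (I.map r).prod, ?_, ?_, hdp⟩,
        ⟨x, by rw [hK0]; exact hx, ⟨y, by rw [hK0]; exact hy, hxy.symm⟩⟩⟩
      · rw [le_div_iff₀ hpIpos]; linarith
      · rw [div_le_iff₀ hpIpos]
        have h5 : (J.map r).prod = rmin⁻¹ * (rmin * (J.map r).prod) := by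
          field_simp
        rw [h5]
        have := mul_le_mul_of_nonneg_left h2 (inv_pos.mpr hrmin0).le
        linarith [this]
    -- touching in the degenerate cases
    have touch_base : ∀ (I J : List (Fin m))
        (g : EuclideanSpace ℝ (Fin d) → EuclideanSpace ℝ (Fin d)),
        wordMap f I ∘ g = wordMap f J → (I = [] ∨ J = []) →
        ∃ x ∈ K, ∃ y ∈ K, x = g y := by
      rintro I J g heq (rfl | rfl)
      · obtain ⟨z, hz⟩ := hKne
        exact ⟨wordMap f J z, wordMap_mem hfK J hz, z, hz, (congrFun heq z).symm⟩
      · obtain ⟨z, hz⟩ := hKne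
        refine ⟨z, hz, wordMap f I z, wordMap_mem hfK I hz, ?_⟩
        have h1 := congrFun heq (wordMap f I z)
        simp only [Function.comp_apply] at h1
        have hinj : Function.Injective (wordMap f I) := by
          intro u v huv
          have hd := wordMap_dist hsim I u v
          rw [huv, dist_self] at hd
          have hp := wordMap_prod_pos hrpos I
          have : dist u v = 0 := by nlinarith [dist_nonneg (x := u) (y := v)]
          exact dist_eq_zero.mp this
        exact (hinj h1).symm
    -- the core induction: a non-touching neighbor map is dominated by a
    -- non-touching candidate map
    have core : ∀ n : ℕ, ∀ (I J : List (Fin m))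
        (g : EuclideanSpace ℝ (Fin d) → EuclideanSpace ℝ (Fin d)),
        I.length + J.length ≤ n →
        wordMap f I ∘ g = wordMap f J →
        rmin * (I.map r).prod ≤ (J.map r).prod →
        rmin * (J.map r).prod ≤ (I.map r).prod →
        (¬ ∃ x ∈ K, ∃ y ∈ K, x = g y) →
        ∃ c ∈ candSet f rmin K, (¬ ∃ x ∈ K, ∃ y ∈ K, x = c y) ∧
          ∀ t, 0 ≤ t → (∃ x ∈ K, ∃ y ∈ K, dist x (g y) ≤ t) →
            (∃ x ∈ K, ∃ y ∈ K, dist x (c y) ≤ t) := by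
      intro n
      induction n with
      | zero =>
        intro I J g hlen heq _ _ hnt
        have hI : I = [] := List.length_eq_zero_iff.mp (by omega)
        exact absurd (touch_base I J g heq (Or.inl hI)) hnt
      | succ n ih =>
        intro I J g hlen heq hrat1 hrat2 hnt
        rcases List.eq_nil_or_concat I with rfl | ⟨I', a, hI⟩
        · exact absurd (touch_base _ J g heq (Or.inl rfl)) hnt
        rw [List.concat_eq_append] at hI
        subst hI
        rcases List.eq_nil_or_concat J with rfl | ⟨J', b, hJ⟩
        · exact absurd (touch_base _ _ g heq (Or.inr rfl)) hnt
        rw [List.concat_eq_append] at hJ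
        subst hJ
        have hprodI : ((I' ++ [a]).map r).prod = (I'.map r).prod * r a := by simp
        have hprodJ : ((J' ++ [b]).map r).prod = (J'.map r).prod * r b := by simp
        have hpI' := wordMap_prod_pos hrpos I'
        have hpJ' := wordMap_prod_pos hrpos J'
        have hpI := wordMap_prod_pos hrpos (I' ++ [a])
        have hpJ := wordMap_prod_pos hrpos (J' ++ [b])
        by_cases hcmp : ((J' ++ [b]).map r).prod ≤ ((I' ++ [a]).map r).prod
        · -- strip the last letter of J
          set p : EuclideanSpace ℝ (Fin d) → EuclideanSpace ℝ (Fin d) :=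
            g ∘ Function.invFun (f b) with hpdef
          have heq' : wordMap f (I' ++ [a]) ∘ p = wordMap f J' := by
            funext y
            show wordMap f (I' ++ [a]) (g (Function.invFun (f b) y)) = wordMap f J' y
            have h1 := congrFun heq (Function.invFun (f b) y)
            simp only [Function.comp_apply] at h1
            rw [h1, wordMap_append]
            show wordMap f J' (f b (Function.invFun (f b) y)) = wordMap f J' y
            rw [happ]
          have hrat1' : rmin * ((I' ++ [a]).map r).prod ≤ (J'.map r).prod := by
            rw [hprodJ] at hrat1
            nlinarith [hrle1 b, hrpos b]
          have hrat2' : rmin * (J'.map r).prod ≤ ((I' ++ [a]).map r).prod := by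
            rw [hprodJ] at hcmp
            nlinarith [hrminle b]
          have htr : ∀ t, 0 ≤ t → (∃ x ∈ K, ∃ y ∈ K, dist x (g y) ≤ t) →
              (∃ x ∈ K, ∃ y ∈ K, dist x (p y) ≤ t) := by
            rintro t ht ⟨x, hx, y, hy, hdxy⟩
            refine ⟨x, hx, f b y, hfK b y hy, ?_⟩
            have hpy : p (f b y) = g y := by
              show g (Function.invFun (f b) (f b y)) = g y
              rw [hsymm]
            rwa [hpy]
          have hback : g = p ∘ f b := by
            funext x
            show g x = g (Function.invFun (f b) (f b x))
            rw [hsymm]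
          by_cases htp : ∃ x ∈ K, ∃ y ∈ K, x = p y
          · have hpP := mkmem (I' ++ [a]) J' p heq' hrat1' hrat2' htp
            have hCmem : g ∈ candSet f rmin K :=
              Or.inr (mem_iUnion.mpr ⟨b, ⟨p, hpP, hback.symm⟩⟩)
            exact ⟨g, hCmem, hnt, fun t ht hcl => hcl⟩
          · have hlen' : (I' ++ [a]).length + J'.length ≤ n := by
              simp only [List.length_append, List.length_singleton] at hlen ⊢
              omega
            obtain ⟨c, hcC, hct, htr'⟩ := ih (I' ++ [a]) J' p hlen' heq' hrat1' hrat2' htp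
            exact ⟨c, hcC, hct, fun t ht hcl => htr' t ht (htr t ht hcl)⟩
        · -- strip the last letter of I
          push_neg at hcmp
          set p : EuclideanSpace ℝ (Fin d) → EuclideanSpace ℝ (Fin d) := f a ∘ g with hpdef
          have heq' : wordMap f I' ∘ p = wordMap f (J' ++ [b]) := by
            funext x
            show wordMap f I' (f a (g x)) = wordMap f (J' ++ [b]) x
            have h1 : wordMap f I' (f a (g x)) = wordMap f (I' ++ [a]) (g x) := by
              rw [wordMap_append]; rfl
            rw [h1]
            exact congrFun heq x
          have hrat1' : rmin * (I'.map r).prod ≤ ((J' ++ [b]).map r).prod := by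
            rw [hprodI] at hcmp
            nlinarith [hrminle a, hrpos a]
          have hrat2' : rmin * ((J' ++ [b]).map r).prod ≤ (I'.map r).prod := by
            rw [hprodI] at hrat2
            nlinarith [hrle1 a, hrpos a, hrmin0, hpJ]
          have htr : ∀ t, 0 ≤ t → (∃ x ∈ K, ∃ y ∈ K, dist x (g y) ≤ t) →
              (∃ x ∈ K, ∃ y ∈ K, dist x (p y) ≤ t) := by
            rintro t ht ⟨x, hx, y, hy, hdxy⟩
            refine ⟨f a x, hfK a x hx, y, hy, ?_⟩
            have hd : dist (f a x) (p y) = r a * dist x (g y) := hsim a x (g y)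
            rw [hd]
            calc r a * dist x (g y) ≤ r a * t :=
                mul_le_mul_of_nonneg_left hdxy (hrpos a).le
            _ ≤ 1 * t := mul_le_mul_of_nonneg_right (hrle1 a) ht
            _ = t := one_mul t
          have hback : g = Function.invFun (f a) ∘ p := by
            funext x
            show g x = Function.invFun (f a) (f a (g x))
            rw [hsymm]
          by_cases htp : ∃ x ∈ K, ∃ y ∈ K, x = p y
          · have hpP := mkmem I' (J' ++ [b]) p heq' hrat1' hrat2' htp
            have hCmem : g ∈ candSet f rmin K :=
              Or.inl (mem_iUnion.mpr ⟨a, ⟨p, hpP, hback.symm⟩⟩)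
            exact ⟨g, hCmem, hnt, fun t ht hcl => hcl⟩
          · have hlen' : I'.length + (J' ++ [b]).length ≤ n := by
              simp only [List.length_append, List.length_singleton] at hlen ⊢
              omega
            obtain ⟨c, hcC, hct, htr'⟩ := ih I' (J' ++ [b]) p hlen' heq' hrat1' hrat2' htp
            exact ⟨c, hcC, hct, fun t ht hcl => htr' t ht (htr t ht hcl)⟩
    -- every candidate map is a similarity, hence continuous
    have hCsim : ∀ c ∈ candSet f rmin K, ∃ ρ : ℝ, 0 < ρ ∧
        ∀ x y, dist (c x) (c y) = ρ * dist x y := by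
      have hPsim : ∀ p ∈ insert id (NeighborSet f rmin K 0), ∃ ρ : ℝ, 0 < ρ ∧
          ∀ x y, dist (p x) (p y) = ρ * dist x y := by
        intro p hp
        rcases mem_insert_iff.mp hp with rfl | hpN
        · exact ⟨1, one_pos, fun x y => by simp⟩
        · obtain ⟨_, _, ⟨ρ, hρ1, _, hρd⟩, _⟩ := hpN
          exact ⟨ρ, lt_of_lt_of_le hrmin0 hρ1, hρd⟩
      have hesim : ∀ i u v, dist (Function.invFun (f i) u) (Function.invFun (f i) v)
          = (r i)⁻¹ * dist u v := by
        intro i u v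
        have h1 := hsim i (Function.invFun (f i) u) (Function.invFun (f i) v)
        rw [happ, happ] at h1
        rw [h1]
        rw [inv_mul_cancel_left₀ (hrpos i).ne']
      intro c hc
      rcases hc with hc | hc
      · obtain ⟨a, hc⟩ := mem_iUnion.mp hc
        obtain ⟨p, hpP, rfl⟩ := hc
        obtain ⟨ρ, hρ0, hρd⟩ := hPsim p hpP
        refine ⟨(r a)⁻¹ * ρ, mul_pos (inv_pos.mpr (hrpos a)) hρ0, fun x y => ?_⟩
        show dist (Function.invFun (f a) (p x)) (Function.invFun (f a) (p y)) = _
        rw [hesim, hρd]; ring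
      · obtain ⟨b, hc⟩ := mem_iUnion.mp hc
        obtain ⟨p, hpP, rfl⟩ := hc
        obtain ⟨ρ, hρ0, hρd⟩ := hPsim p hpP
        refine ⟨ρ * r b, mul_pos hρ0 (hrpos b), fun x y => ?_⟩
        show dist (p (f b x)) (p (f b y)) = _
        rw [hρd, hsim]; ring
    have hCcont : ∀ c ∈ candSet f rmin K, Continuous c := by
      intro c hc
      obtain ⟨ρ, hρ0, hρd⟩ := hCsim c hc
      refine LipschitzWith.continuous (K := ρ.toNNReal) ?_
      refine LipschitzWith.of_dist_le_mul fun x y => ?_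
      rw [hρd, Real.coe_toNNReal ρ hρ0.le]
    -- separation of each non-touching candidate from K
    have hsep : ∀ c ∈ candSet f rmin K, (¬ ∃ x ∈ K, ∃ y ∈ K, x = c y) →
        ∃ t, 0 < t ∧ ∀ x ∈ K, ∀ y ∈ K, t < dist x (c y) := by
      intro c hc hnc
      have hcont := hCcont c hc
      have hKK : IsCompact (K ×ˢ K) := hKc.prod hKc
      have hne : (K ×ˢ K).Nonempty := hKne.prod hKne
      have hcf : ContinuousOn
          (fun q : EuclideanSpace ℝ (Fin d) × EuclideanSpace ℝ (Fin d) => dist q.1 (c q.2))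
          (K ×ˢ K) :=
        (Continuous.dist continuous_fst (hcont.comp continuous_snd)).continuousOn
      obtain ⟨q0, hq0, hmin⟩ := hKK.exists_isMinOn hne hcf
      have hq01 : q0.1 ∈ K := (mem_prod.mp hq0).1
      have hq02 : q0.2 ∈ K := (mem_prod.mp hq0).2
      have hpos : 0 < dist q0.1 (c q0.2) := by
        rcases lt_or_eq_of_le (dist_nonneg (x := q0.1) (y := c q0.2)) with h | h
        · exact h
        · exact absurd ⟨q0.1, hq01, q0.2, hq02, dist_eq_zero.mp h.symm⟩ hnc
      refine ⟨dist q0.1 (c q0.2) / 2, by positivity, fun x hx y hy => ?_⟩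
      have := isMinOn_iff.mp hmin (x, y) (mk_mem_prod hx hy)
      simp only at this
      linarith
    -- a uniform separation bound
    obtain ⟨τ, hτ, hτP⟩ := finite_uniform (candSet f rmin K) (candSet_finite hfin0)
      (fun c t => (¬ ∃ x ∈ K, ∃ y ∈ K, x = c y) → ∀ x ∈ K, ∀ y ∈ K, t < dist x (c y))
      (fun c s t hst hPt hnc x hx y hy => lt_of_le_of_lt hst (hPt hnc x hx y hy))
      (fun c hc => by
        by_cases hnc : ∃ x ∈ K, ∃ y ∈ K, x = c y
        · exact ⟨1, one_pos, fun h => absurd hnc h⟩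
        · obtain ⟨t, ht, hsep'⟩ := hsep c hc hnc
          exact ⟨t, ht, fun _ => hsep'⟩)
    -- choice of ε
    have hrinv : 0 < rmin⁻¹ := inv_pos.mpr hrmin0
    have h1r : 0 < 1 + rmin⁻¹ := by linarith
    set ε := τ / (2 * (1 + rmin⁻¹)) with hεdef
    have hεpos : 0 < ε := div_pos hτ (by linarith)
    have hεnn : 0 ≤ ε := hεpos.le
    refine ⟨ε, hεpos, hfin0.subset ?_⟩
    rintro g ⟨⟨I, J, hIJ⟩, hgid, ⟨ρ, hρ1, hρ2, hρd⟩, w, hw1, u, hu1, hwu⟩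
    rcases subsingleton_or_nontrivial (EuclideanSpace ℝ (Fin d)) with hss | hnt
    · exact absurd (funext fun x => Subsingleton.elim _ _) hgid
    obtain ⟨x0, y0, hxy0⟩ := exists_pair_ne (EuclideanSpace ℝ (Fin d))
    have hd0 : dist x0 y0 ≠ 0 := dist_ne_zero.mpr hxy0
    have hpI := wordMap_prod_pos hrpos I
    have hpJ := wordMap_prod_pos hrpos J
    have key : (I.map r).prod * ρ = (J.map r).prod := by
      have e1 := congrFun hIJ x0
      have e2 := congrFun hIJ y0
      simp only [Function.comp_apply] at e1 e2
      have h1 : dist (wordMap f I (g x0)) (wordMap f I (g y0))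
          = dist (wordMap f J x0) (wordMap f J y0) := by rw [e1, e2]
      rw [wordMap_dist hsim, wordMap_dist hsim, hρd] at h1
      exact mul_right_cancel₀ hd0 (by linear_combination h1)
    have hrat1 : rmin * (I.map r).prod ≤ (J.map r).prod := by
      nlinarith [mul_le_mul_of_nonneg_right hρ1 hpI.le]
    have hrat2 : rmin * (J.map r).prod ≤ (I.map r).prod := by
      have hmm : rmin * rmin⁻¹ = 1 := mul_inv_cancel₀ (ne_of_gt hrmin0)
      nlinarith [mul_le_mul_of_nonneg_left hρ2 hpI.le, hrmin0.le]
    have hthick : ∀ z ∈ Metric.cthickening ε K, ∃ x ∈ K, dist z x ≤ ε := by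
      intro z hz
      rw [hKc.isClosed.cthickening_eq_biUnion_closedBall hεnn] at hz
      obtain ⟨x, hx, hzx⟩ := mem_iUnion₂.mp hz
      exact ⟨x, hx, Metric.mem_closedBall.mp hzx⟩
    obtain ⟨x, hxK, hxw⟩ := hthick w hw1
    obtain ⟨y, hyK, hyu⟩ := hthick u hu1
    have hρpos : 0 < ρ := lt_of_lt_of_le hrmin0 hρ1
    have hclose : dist x (g y) ≤ (1 + ρ) * ε := by
      have t1 : dist x (g y) ≤ dist x w + dist w (g y) := dist_triangle _ _ _
      have t2 : dist w (g y) = ρ * dist u y := by rw [← hwu, hρd]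
      have t4 : dist x w ≤ ε := by rw [dist_comm]; exact hxw
      nlinarith [hyu, hρpos.le]
    have htouch : ∃ x' ∈ K, ∃ y' ∈ K, x' = g y' := by
      by_contra hnt'
      obtain ⟨c, hcC, hct, htrans⟩ :=
        core (I.length + J.length) I J g le_rfl hIJ hrat1 hrat2 hnt'
      obtain ⟨x', hx', y', hy', hd'⟩ :=
        htrans ((1 + ρ) * ε) (by positivity) ⟨x, hxK, y, hyK, hclose⟩
      have hgt := hτP c hcC hct x' hx' y' hy'
      have hb1 : (1 + ρ) * ε ≤ (1 + rmin⁻¹) * ε := by nlinarith [hρ2]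
      have hb2 : (1 + rmin⁻¹) * ε = τ / 2 := by
        rw [hεdef]; field_simp
      linarith
    obtain ⟨xt, hxt, yt, hyt, hxyt⟩ := htouch
    exact ⟨⟨I, J, hIJ⟩, hgid, ⟨ρ, hρ1, hρ2, hρd⟩,
      ⟨xt, by rw [hK0]; exact hxt, ⟨yt, by rw [hK0]; exact hyt, hxyt.symm⟩⟩⟩
end
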